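/- arXiv:1908.11264 — 9 statements merged into one kernel-verified Lean document; each statement's English description precedes it below -/
import Mathlib

section
/- In GLP, for ordinals α > β, GLP proves ⟨α⟩⊤ → (⟨β⟩φ ↔ ⟨α⟩⟨β⟩φ). -/
/-- Formulas of transfinite polymodal provability logic GLP, with
modalities `[ξ]` indexed by ordinals. -/
inductive GLPFormula : Type 1
  | bot : GLPFormula
  | var : ℕ → GLPFormula
  | imp : GLPFormula → GLPFormula → GLPFormula
  | box : Ordinal.{0} → GLPFormula → GLPFormula

namespace GLPFormula

def neg (a : GLPFormula) : GLPFormula := a.imp bot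
def top : GLPFormula := neg bot
def and (a b : GLPFormula) : GLPFormula := (a.imp b.neg).neg
def or (a b : GLPFormula) : GLPFormula := a.neg.imp b
def iff (a b : GLPFormula) : GLPFormula := (a.imp b).and (b.imp a)
/-- `⟨ξ⟩a := ¬[ξ]¬a`. -/
def dia (ξ : Ordinal.{0}) (a : GLPFormula) : GLPFormula := (box ξ a.neg).neg

end GLPFormula

/-- Hilbert-style derivability for GLP (over all ordinal-indexed modalities):
propositional tautologies (via a complete Hilbert basis), distribution,
transitivity, Löb, negative introspection and monotonicity for `ξ < ζ`,
with modus ponens and necessitation for each modality. -/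
inductive GLPProof : GLPFormula → Prop
  | ax1 (a b : GLPFormula) : GLPProof (a.imp (b.imp a))
  | ax2 (a b c : GLPFormula) :
      GLPProof ((a.imp (b.imp c)).imp ((a.imp b).imp (a.imp c)))
  | ax3 (a b : GLPFormula) : GLPProof ((a.neg.imp b.neg).imp (b.imp a))
  | dist (ξ : Ordinal) (a b : GLPFormula) :
      GLPProof ((GLPFormula.box ξ (a.imp b)).imp
        ((GLPFormula.box ξ a).imp (GLPFormula.box ξ b)))
  | trans (ξ : Ordinal) (a : GLPFormula) :
      GLPProof ((GLPFormula.box ξ a).imp (GLPFormula.box ξ (GLPFormula.box ξ a)))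
  | lob (ξ : Ordinal) (a : GLPFormula) :
      GLPProof ((GLPFormula.box ξ ((GLPFormula.box ξ a).imp a)).imp (GLPFormula.box ξ a))
  | negIntro {ξ ζ : Ordinal} (a : GLPFormula) (h : ξ < ζ) :
      GLPProof ((GLPFormula.dia ξ a).imp (GLPFormula.box ζ (GLPFormula.dia ξ a)))
  | mono {ξ ζ : Ordinal} (a : GLPFormula) (h : ξ < ζ) :
      GLPProof ((GLPFormula.box ξ a).imp (GLPFormula.box ζ a))
  | mp {a b : GLPFormula} : GLPProof (a.imp b) → GLPProof a → GLPProof b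
  | nec (ξ : Ordinal) {a : GLPFormula} : GLPProof a → GLPProof (GLPFormula.box ξ a)

namespace GLPProof

open GLPFormula

/-- weakening -/
theorem wk {b : GLPFormula} (a : GLPFormula) (h : GLPProof b) : GLPProof (a.imp b) :=
  mp (ax1 b a) h

/-- identity -/
theorem id' (a : GLPFormula) : GLPProof (a.imp a) :=
  mp (mp (ax2 a (a.imp a) a) (ax1 a (a.imp a))) (ax1 a a)

/-- composition under a hypothesis -/
theorem comp {a b c : GLPFormula} (h1 : GLPProof (a.imp (b.imp c)))
    (h2 : GLPProof (a.imp b)) : GLPProof (a.imp c) :=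
  mp (mp (ax2 a b c) h1) h2

/-- transitivity of implication -/
theorem tr {a b c : GLPFormula} (h1 : GLPProof (a.imp b))
    (h2 : GLPProof (b.imp c)) : GLPProof (a.imp c) :=
  comp (wk a h2) h1

/-- internal B : (b→c) → ((a→b) → (a→c)) -/
theorem bInt (a b c : GLPFormula) :
    GLPProof ((b.imp c).imp ((a.imp b).imp (a.imp c))) :=
  tr (ax1 (b.imp c) a) (ax2 a b c)

/-- discharge a proved inner hypothesis -/
theorem mpUnder {p h g : GLPFormula} (H1 : GLPProof (p.imp (h.imp g)))
    (H2 : GLPProof h) : GLPProof (p.imp g) :=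
  comp H1 (wk p H2)

/-- internal C (flip) : (a→(b→c)) → (b→(a→c)) -/
theorem cInt (a b c : GLPFormula) :
    GLPProof ((a.imp (b.imp c)).imp (b.imp (a.imp c))) :=
  mpUnder (tr (ax2 a b c) (bInt b (a.imp b) (a.imp c))) (ax1 b a)

/-- meta flip -/
theorem flip {a b c : GLPFormula} (h : GLPProof (a.imp (b.imp c))) :
    GLPProof (b.imp (a.imp c)) :=
  mp (cInt a b c) h

/-- flip the two innermost of three hypotheses -/
theorem flipUnder {p q r s : GLPFormula} (h : GLPProof (p.imp (q.imp (r.imp s)))) :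
    GLPProof (p.imp (r.imp (q.imp s))) :=
  tr h (cInt q r s)

/-- compose with a proved implication in the conclusion -/
theorem trUnder {p q r s : GLPFormula} (h1 : GLPProof (p.imp (q.imp r)))
    (h2 : GLPProof (r.imp s)) : GLPProof (p.imp (q.imp s)) :=
  tr h1 (mp (bInt q r s) h2)

/-- internal contraposition : (q→r) → (¬r→¬q) -/
theorem cpInt (q r : GLPFormula) :
    GLPProof ((q.imp r).imp (r.neg.imp q.neg)) :=
  flip (bInt q r GLPFormula.bot)

/-- meta contraposition -/
theorem cp {q r : GLPFormula} (h : GLPProof (q.imp r)) :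
    GLPProof (r.neg.imp q.neg) :=
  mp (cpInt q r) h

/-- double negation introduction -/
theorem dni (a : GLPFormula) : GLPProof (a.imp a.neg.neg) :=
  flip (id' a.neg)

/-- double negation elimination -/
theorem dne (a : GLPFormula) : GLPProof (a.neg.neg.imp a) :=
  mp (ax3 a a.neg.neg) (dni a.neg)

/-- ex falso -/
theorem efq (a : GLPFormula) : GLPProof (GLPFormula.bot.imp a) :=
  mp (ax3 a GLPFormula.bot) (wk a.neg (id' GLPFormula.bot))

/-- conjunction introduction under a hypothesis -/
theorem andIntro {p x y : GLPFormula} (h1 : GLPProof (p.imp x))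
    (h2 : GLPProof (p.imp y)) : GLPProof (p.imp (x.and y)) :=
  comp (tr h1 (flipUnder (flip (id' (x.imp y.neg))))) h2

/-- boxed implication from a proved implication -/
theorem boxImp (ξ : Ordinal) {a b : GLPFormula} (h : GLPProof (a.imp b)) :
    GLPProof ((box ξ a).imp (box ξ b)) :=
  mp (dist ξ a b) (nec ξ h)

end GLPProof

/-- for ordinals `α > β`, GLP proves `⟨α⟩⊤ → (⟨β⟩φ ↔ ⟨α⟩⟨β⟩φ)`. -/
theorem glp_dia_absorption (α β : Ordinal) (h : β < α) (φ : GLPFormula) :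
    GLPProof ((GLPFormula.dia α GLPFormula.top).imp
      ((GLPFormula.dia β φ).iff (GLPFormula.dia α (GLPFormula.dia β φ)))) := by
  open GLPFormula GLPProof in
  exact
    let D := dia β φ
    -- ⊢ D → (¬D → ¬⊤)
    have s1 : GLPProof (D.imp (D.neg.imp top.neg)) :=
      GLPProof.trUnder (GLPProof.dni D) (GLPProof.efq top.neg)
    -- ⊢ [α]D → ([α]¬D → [α]¬⊤)
    have s2 : GLPProof ((box α D).imp ((box α D.neg).imp (box α top.neg))) :=
      GLPProof.tr (GLPProof.boxImp α s1) (GLPProof.dist α D.neg top.neg)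
    -- ⊢ [α]D → (⟨α⟩⊤ → ⟨α⟩D)
    have s3 : GLPProof ((box α D).imp ((dia α top).imp (dia α D))) :=
      GLPProof.tr s2 (GLPProof.cpInt (box α D.neg) (box α top.neg))
    have dir1 : GLPProof ((dia α top).imp (D.imp (dia α D))) :=
      GLPProof.flip (GLPProof.tr (GLPProof.negIntro φ h) s3)
    let B := box β φ.neg
    -- ⊢ ¬D → [α]¬D   (note ¬D = ¬¬B)
    have t1 : GLPProof (D.neg.imp (box α D.neg)) :=
      GLPProof.tr (GLPProof.dne B)
        (GLPProof.tr (GLPProof.tr (GLPProof.trans β φ.neg) (GLPProof.mono B h))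
          (GLPProof.boxImp α (GLPProof.dni B)))
    have dir2 : GLPProof ((dia α D).imp D) :=
      GLPProof.tr (GLPProof.cp t1) (GLPProof.dne D)
    GLPProof.andIntro dir1 (GLPProof.wk (dia α top) dir2)
end

section
/- In GLP, for ordinals α ≥ β > 0 (and with [0] denoted □), GLP proves ⟨α⟩⊤ → ( (⟨β⟩φ ∨ □ψ) ↔ ⟨β⟩(φ ∨ □ψ) ). -/
namespace GLPHelp
open GLPFormula

/-- Derivability from a list of hypotheses. -/
inductive Deriv : List GLPFormula → GLPFormula → Prop
  | thm {Γ : List GLPFormula} {a : GLPFormula} : GLPProof a → Deriv Γ a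
  | hyp {Γ : List GLPFormula} {a : GLPFormula} : a ∈ Γ → Deriv Γ a
  | mp {Γ : List GLPFormula} {a b : GLPFormula} :
      Deriv Γ (a.imp b) → Deriv Γ a → Deriv Γ b

theorem proof_id (a : GLPFormula) : GLPProof (a.imp a) :=
  .mp (.mp (.ax2 a (a.imp a) a) (.ax1 a (a.imp a))) (.ax1 a a)

theorem Deriv.weaken {Γ Γ' : List GLPFormula} {a : GLPFormula}
    (d : Deriv Γ a) (s : Γ ⊆ Γ') : Deriv Γ' a := by
  induction d with
  | thm p => exact .thm p
  | hyp m => exact .hyp (s m)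
  | mp _ _ ih1 ih2 => exact .mp ih1 ih2

theorem Deriv.ded_aux {Δ : List GLPFormula} {a : GLPFormula} (d : Deriv Δ a) :
    ∀ h Γ, Δ = h :: Γ → Deriv Γ (h.imp a) := by
  induction d with
  | thm p => intro h Γ _; exact .mp (.thm (.ax1 _ _)) (.thm p)
  | hyp m =>
      intro h Γ e
      subst e
      rcases List.mem_cons.mp m with rfl | m
      · exact .thm (proof_id _)
      · exact .mp (.thm (.ax1 _ _)) (.hyp m)
  | mp _ _ ih1 ih2 =>
      intro h Γ e
      exact .mp (.mp (.thm (.ax2 _ _ _)) (ih1 h Γ e)) (ih2 h Γ e)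

theorem Deriv.ded {Γ : List GLPFormula} {h a : GLPFormula}
    (d : Deriv (h :: Γ) a) : Deriv Γ (h.imp a) := d.ded_aux h Γ rfl

theorem Deriv.toProof_aux {Γ : List GLPFormula} {a : GLPFormula} (d : Deriv Γ a) :
    Γ = [] → GLPProof a := by
  induction d with
  | thm p => intro _; exact p
  | hyp m => intro e; subst e; simp at m
  | mp _ _ ih1 ih2 => intro e; exact .mp (ih1 e) (ih2 e)

theorem Deriv.toProof {a : GLPFormula} (d : Deriv [] a) : GLPProof a :=
  d.toProof_aux rfl

theorem P_dni (a : GLPFormula) : GLPProof (a.imp a.neg.neg) :=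
  Deriv.toProof (Deriv.ded (Deriv.ded
    (.mp (.hyp (show a.neg ∈ [a.neg, a] by simp))
      (.hyp (show a ∈ [a.neg, a] by simp)))))

theorem P_dne (a : GLPFormula) : GLPProof (a.neg.neg.imp a) :=
  .mp (.ax3 a a.neg.neg) (P_dni a.neg)

theorem P_exfalso (a : GLPFormula) : GLPProof (GLPFormula.bot.imp a) :=
  .mp (.ax3 a .bot)
    (Deriv.toProof (Deriv.ded (.thm (proof_id .bot))))

theorem P_trans {a b c : GLPFormula} (h1 : GLPProof (a.imp b))
    (h2 : GLPProof (b.imp c)) : GLPProof (a.imp c) :=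
  Deriv.toProof (Deriv.ded (.mp (.thm h2) (.mp (.thm h1) (.hyp (by simp)))))

theorem P_contra {a b : GLPFormula} (h : GLPProof (a.imp b)) :
    GLPProof (b.neg.imp a.neg) :=
  Deriv.toProof (Deriv.ded (Deriv.ded
    (.mp (.hyp (show b.neg ∈ [a, b.neg] by simp))
      (.mp (.thm h) (.hyp (by simp))))))

theorem box_mono {ξ : Ordinal} {a b : GLPFormula} (h : GLPProof (a.imp b)) :
    GLPProof ((box ξ a).imp (box ξ b)) :=
  .mp (.dist ξ a b) (.nec ξ h)

theorem box_mono2 {ξ : Ordinal} {a b c : GLPFormula}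
    (h : GLPProof (a.imp (b.imp c))) :
    GLPProof ((box ξ a).imp ((box ξ b).imp (box ξ c))) :=
  P_trans (box_mono h) (.dist ξ b c)

theorem dia_mono {ξ : Ordinal} {a b : GLPFormula} (h : GLPProof (a.imp b)) :
    GLPProof ((dia ξ a).imp (dia ξ b)) :=
  P_contra (box_mono (P_contra h))

theorem Deriv.andI {Γ : List GLPFormula} {p q : GLPFormula}
    (hp : Deriv Γ p) (hq : Deriv Γ q) : Deriv Γ (p.and q) :=
  Deriv.ded (.mp
    (.mp (.hyp List.mem_cons_self) (hp.weaken (fun _ hm => List.mem_cons_of_mem _ hm)))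
    (hq.weaken (fun _ hm => List.mem_cons_of_mem _ hm)))

/-- `a → a ∨ b` -/
theorem P_orl (a b : GLPFormula) : GLPProof (a.imp (a.or b)) :=
  Deriv.toProof (Deriv.ded (Deriv.ded
    (.mp (.thm (P_exfalso b))
      (.mp (.hyp (show a.neg ∈ [a.neg, a] by simp)) (.hyp (by simp))))))

/-- `b → a ∨ b` -/
theorem P_orr (a b : GLPFormula) : GLPProof (b.imp (a.or b)) := .ax1 b a.neg

/-- `c → (¬c → ¬⊤)` -/
theorem P_taut1 (c : GLPFormula) : GLPProof (c.imp (c.neg.imp top.neg)) :=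
  Deriv.toProof (Deriv.ded (Deriv.ded (Deriv.ded
    (.mp (.hyp (show c.neg ∈ [top, c.neg, c] by simp))
      (.hyp (show c ∈ [top, c.neg, c] by simp))))))

/-- `[ξ]c → (⟨ξ⟩⊤ → ⟨ξ⟩c)` -/
theorem P_K {ξ : Ordinal} (c : GLPFormula) :
    GLPProof ((box ξ c).imp ((dia ξ top).imp (dia ξ c))) :=
  Deriv.toProof (Deriv.ded (Deriv.ded (Deriv.ded (.mp
    (.hyp (show dia ξ top ∈ [box ξ c.neg, dia ξ top, box ξ c] by simp))
    (.mp
      (.mp (.thm (box_mono2 (P_taut1 c))) (.hyp (by simp)))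
      (.hyp (show box ξ c.neg ∈ [box ξ c.neg, dia ξ top, box ξ c] by simp)))))))

/-- `¬φ → (¬b → ¬(φ ∨ b))` -/
theorem P_taut2 (a b : GLPFormula) :
    GLPProof (a.neg.imp (b.neg.imp (a.or b).neg)) :=
  Deriv.toProof (Deriv.ded (Deriv.ded (Deriv.ded
    (.mp (.hyp (show b.neg ∈ [a.or b, b.neg, a.neg] by simp))
      (.mp (.hyp (show a.or b ∈ [a.or b, b.neg, a.neg] by simp))
        (.hyp (by simp)))))))

/-- `[β]¬φ → (⟨β⟩(φ ∨ b) → ⟨β⟩b)` -/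
theorem P_split {ξ : Ordinal} (a b : GLPFormula) :
    GLPProof ((box ξ a.neg).imp ((dia ξ (a.or b)).imp (dia ξ b))) :=
  Deriv.toProof (Deriv.ded (Deriv.ded (Deriv.ded (.mp
    (.hyp (show dia ξ (a.or b) ∈ [box ξ b.neg, dia ξ (a.or b), box ξ a.neg]
      by simp))
    (.mp
      (.mp (.thm (box_mono2 (P_taut2 a b))) (.hyp (by simp)))
      (.hyp (show box ξ b.neg ∈ [box ξ b.neg, dia ξ (a.or b), box ξ a.neg]
        by simp)))))))

end GLPHelp

/-- for ordinals `α ≥ β > 0` (with `□ = [0]`), GLP proves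
`⟨α⟩⊤ → ((⟨β⟩φ ∨ □ψ) ↔ ⟨β⟩(φ ∨ □ψ))`. -/
theorem glp_box_disjunction_dia (α β : Ordinal) (h0 : 0 < β) (h : β ≤ α)
    (φ ψ : GLPFormula) :
    GLPProof ((GLPFormula.dia α GLPFormula.top).imp
      (((GLPFormula.dia β φ).or (GLPFormula.box 0 ψ)).iff
        (GLPFormula.dia β (φ.or (GLPFormula.box 0 ψ))))) := by
  classical
  open GLPFormula GLPHelp in
  refine ?_
  set A := GLPFormula.dia β φ with hA
  set B := GLPFormula.box 0 ψ with hB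
  set C := φ.or B with hC
  set G := GLPFormula.dia β C with hG
  set D := GLPFormula.dia α GLPFormula.top with hD
  -- D → ⟨β⟩⊤
  have hDb : GLPProof (D.imp (GLPFormula.dia β GLPFormula.top)) := by
    rcases lt_or_eq_of_le h with hlt | rfl
    · exact GLPHelp.P_contra (GLPProof.mono _ hlt)
    · exact GLPHelp.proof_id _
  -- B → [β]C
  have hBbC : GLPProof (B.imp (GLPFormula.box β C)) :=
    GLPHelp.P_trans (GLPProof.trans 0 ψ)
      (GLPHelp.P_trans (GLPProof.mono _ h0)
        (GLPHelp.box_mono (GLPHelp.P_orr φ B)))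
  -- D → (B → G)
  have hDBG : GLPProof (D.imp (B.imp G)) :=
    GLPHelp.Deriv.toProof (GLPHelp.Deriv.ded (GLPHelp.Deriv.ded
      (.mp (.mp (.thm (GLPHelp.P_K C))
          (.mp (.thm hBbC) (.hyp (show B ∈ [B, D] by simp))))
        (.mp (.thm hDb) (.hyp (show D ∈ [B, D] by simp))))))
  -- A → G
  have hAG : GLPProof (A.imp G) := GLPHelp.dia_mono (GLPHelp.P_orl φ B)
  -- forward: D → (A ∨ B → G)
  have fwd : GLPProof (D.imp ((A.or B).imp G)) := by
    refine GLPHelp.Deriv.toProof (GLPHelp.Deriv.ded (GLPHelp.Deriv.ded ?_))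
    refine GLPHelp.Deriv.mp (.thm (GLPHelp.P_dne G)) (GLPHelp.Deriv.ded ?_)
    have hnA : GLPHelp.Deriv [G.neg, A.or B, D] A.neg :=
      .mp (.thm (GLPHelp.P_contra hAG)) (.hyp (by simp))
    have hB' : GLPHelp.Deriv [G.neg, A.or B, D] B :=
      .mp (.hyp (show A.or B ∈ [G.neg, A.or B, D] by simp)) hnA
    have hG' : GLPHelp.Deriv [G.neg, A.or B, D] G :=
      .mp (.mp (.thm hDBG) (.hyp (show D ∈ [G.neg, A.or B, D] by simp))) hB'
    exact .mp (.hyp (show G.neg ∈ [G.neg, A.or B, D] by simp)) hG'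
  -- ⟨β⟩B → B
  have hdBB : GLPProof ((GLPFormula.dia β B).imp B) := by
    have n := GLPProof.negIntro (ξ := 0) (ζ := β) ψ.neg h0
    set Y := GLPFormula.dia 0 ψ.neg with hY
    have c1 : GLPProof (Y.neg.imp B) :=
      GLPHelp.P_trans (GLPHelp.P_dne _) (GLPHelp.box_mono (GLPHelp.P_dne ψ))
    have c3 : GLPProof (Y.imp B.neg) :=
      GLPHelp.P_contra (GLPHelp.box_mono (GLPHelp.P_dni ψ))
    exact GLPHelp.P_trans (GLPHelp.P_contra (GLPHelp.box_mono c3))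
      (GLPHelp.P_trans (GLPHelp.P_contra n) c1)
  -- backward: G → A ∨ B
  have bwd : GLPProof (G.imp (A.or B)) := by
    refine GLPHelp.Deriv.toProof (GLPHelp.Deriv.ded (GLPHelp.Deriv.ded ?_))
    have hbφ : GLPHelp.Deriv [A.neg, G] (GLPFormula.box β φ.neg) :=
      .mp (.thm (GLPHelp.P_dne (GLPFormula.box β φ.neg)))
        (.hyp (show A.neg ∈ [A.neg, G] by simp))
    have hdB : GLPHelp.Deriv [A.neg, G] (GLPFormula.dia β B) :=
      .mp (.mp (.thm (GLPHelp.P_split φ B)) hbφ)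
        (.hyp (show G ∈ [A.neg, G] by simp))
    exact .mp (.thm hdBB) hdB
  -- assemble
  refine GLPHelp.Deriv.toProof (GLPHelp.Deriv.ded ?_)
  exact GLPHelp.Deriv.andI
    (.mp (.thm fwd) (.hyp (by simp)))
    (.thm bwd)
end

section
/- Let GL^■ be the extension of Gödel–Löb logic GL (with modality □ satisfying K axioms, transitivity and Löb's axiom) by a new unary operator ■ satisfying: (1) □φ → ■φ, (2) ■(φ→ψ) → (■φ → ■ψ), (3) ■φ → ■■φ, with necessitation for □ only. Then GL^■ derives Löb's axiom for ■: ■(■φ→φ) → ■φ, for every formula φ. -/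
/-- Formulas in the language of GL extended with a second modality `■`. -/
inductive BForm : Type
  | bot : BForm
  | var : ℕ → BForm
  | imp : BForm → BForm → BForm
  | box : BForm → BForm   -- □
  | bbox : BForm → BForm  -- ■

namespace BForm
def neg (a : BForm) : BForm := a.imp bot
end BForm

/-- Derivability in `GL^■`: GL for `□` (Hilbert basis for classical tautologies,
K-distribution, transitivity, Löb, modus ponens and `□`-necessitation), together
with the axiom schemes `□φ → ■φ`, `■(φ→ψ) → (■φ → ■ψ)` and `■φ → ■■φ`.
There is no necessitation rule for `■`. -/
inductive GLBProof : BForm → Prop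
  | ax1 (a b : BForm) : GLBProof (a.imp (b.imp a))
  | ax2 (a b c : BForm) : GLBProof ((a.imp (b.imp c)).imp ((a.imp b).imp (a.imp c)))
  | ax3 (a b : BForm) : GLBProof ((a.neg.imp b.neg).imp (b.imp a))
  | dist (a b : BForm) : GLBProof ((BForm.box (a.imp b)).imp ((BForm.box a).imp (BForm.box b)))
  | trans (a : BForm) : GLBProof ((BForm.box a).imp (BForm.box (BForm.box a)))
  | lob (a : BForm) : GLBProof ((BForm.box ((BForm.box a).imp a)).imp (BForm.box a))
  | boxToBbox (a : BForm) : GLBProof ((BForm.box a).imp (BForm.bbox a))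
  | bdist (a b : BForm) : GLBProof ((BForm.bbox (a.imp b)).imp ((BForm.bbox a).imp (BForm.bbox b)))
  | btrans (a : BForm) : GLBProof ((BForm.bbox a).imp (BForm.bbox (BForm.bbox a)))
  | mp {a b : BForm} : GLBProof (a.imp b) → GLBProof a → GLBProof b
  | nec {a : BForm} : GLBProof a → GLBProof (BForm.box a)

namespace GLBProof

lemma K' {a b : BForm} (h : GLBProof b) : GLBProof (a.imp b) :=
  mp (ax1 b a) h

lemma S1 {a b c : BForm} (h1 : GLBProof (a.imp (b.imp c))) (h2 : GLBProof (a.imp b)) :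
    GLBProof (a.imp c) :=
  mp (mp (ax2 a b c) h1) h2

lemma imp_id (a : BForm) : GLBProof (a.imp a) :=
  S1 (ax1 a (a.imp a)) (ax1 a a)

lemma K2 {a b c : BForm} (h : GLBProof c) : GLBProof (a.imp (b.imp c)) :=
  K' (K' h)

lemma S2 {a b c d : BForm} (h1 : GLBProof (a.imp (b.imp (c.imp d))))
    (h2 : GLBProof (a.imp (b.imp c))) : GLBProof (a.imp (b.imp d)) :=
  S1 (S1 (K' (ax2 b c d)) h1) h2

end GLBProof

/-- `GL^■` derives Löb's axiom for `■`: `■(■φ→φ) → ■φ`. -/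
theorem glb_lob_for_bbox (φ : BForm) :
    GLBProof ((BForm.bbox ((BForm.bbox φ).imp φ)).imp (BForm.bbox φ)) := by
  open GLBProof BForm in
  -- A := ■φ→φ ; χ := ■A → ■φ ; goal is χ.
  let A : BForm := (bbox φ).imp φ
  let χ : BForm := (bbox A).imp (bbox φ)
  -- Derive ⊢ □χ → χ, reasoning under hypotheses x := □χ, y := ■A.
  have d_boxχ : GLBProof ((box χ).imp ((bbox A).imp (box χ))) := ax1 _ _
  have d_bχ : GLBProof ((box χ).imp ((bbox A).imp (bbox χ))) :=
    S2 (K2 (boxToBbox χ)) d_boxχ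
  have d_t2 : GLBProof ((box χ).imp ((bbox A).imp ((bbox (bbox A)).imp (bbox (bbox φ))))) :=
    S2 (K2 (bdist (bbox A) (bbox φ))) d_bχ
  have d_y : GLBProof ((box χ).imp ((bbox A).imp (bbox A))) := K' (imp_id _)
  have d_bbA : GLBProof ((box χ).imp ((bbox A).imp (bbox (bbox A)))) :=
    S2 (K2 (btrans A)) d_y
  have d_bbφ : GLBProof ((box χ).imp ((bbox A).imp (bbox (bbox φ)))) :=
    S2 d_t2 d_bbA
  have d_t4 : GLBProof ((box χ).imp ((bbox A).imp ((bbox (bbox φ)).imp (bbox φ)))) :=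
    S2 (K2 (bdist (bbox φ) φ)) d_y
  have final : GLBProof ((box χ).imp χ) := S2 d_t4 d_bbφ
  have hboxχ : GLBProof (box χ) := mp (lob χ) (nec final)
  exact mp final hboxχ
end

section
/- If T is a sound single-oracle Λ-Münchhausen theory with Münchhausen provability predicate [α]_T, then for every ξ ≺ Λ the consistency statement ⟨ξ⟩_T ⊤ is true in the standard model ℕ. The proof requires no transfinite induction: for ξ = 0 it reduces to consistency of T, and for ξ ≻ 0, a witnessing oracle ⟨ζ⟩_T ψ with □_T(⟨ζ⟩_T ψ → ⊥) contradicts soundness of T. -/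
/-- An abstract arithmetical theory `T`: a type `S` of sentences, derivability
`Prov` (for `T ⊢ ·`), falsum and implication, a standard formalized
provability predicate `box` (for `□_T`), an internal representation `ltS` of
the ordering `≺` on (notations for) ordinals, and internal existential
quantifiers over formulas (`exF`), ordinal notations (`exO`), numbers
(`exN`), and finite sequences of (ordinal, formula) pairs (`exL`). -/
structure MFrame : Type 2 where
  S : Type 1
  Prov : S → Prop
  bot : S
  imp : S → S → S
  box : S → S
  ltS : Ordinal.{0} → Ordinal.{0} → S
  exF : (S → S) → S
  exO : (Ordinal.{0} → S) → S
  exN : (ℕ → S) → S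
  exL : (List (Ordinal.{0} × S) → S) → S

namespace MFrame

variable (F : MFrame)

def neg (a : F.S) : F.S := F.imp a F.bot
def top : F.S := F.neg F.bot
def and (a b : F.S) : F.S := F.neg (F.imp a (F.neg b))
def or (a b : F.S) : F.S := F.imp (F.neg a) b
def iff (a b : F.S) : F.S := F.and (F.imp a b) (F.imp b a)

/-- `⟨ξ⟩_T a := ¬[ξ]_T ¬a` for a candidate Münchhausen predicate `M`. -/
def mdia (M : Ordinal.{0} → F.S → F.S) (ξ : Ordinal.{0}) (a : F.S) : F.S :=
  F.neg (M ξ (F.neg a))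

/-- Basic conditions on the theory `T`: classical propositional logic via a
complete Hilbert basis with modus ponens, the Hilbert–Bernays derivability
conditions for `□_T`, introduction/elimination rules for the internal
existential quantifiers, and correctness of the internal ordering `≺`
(true facts `ξ ≺ ζ` are provable, false ones refutable, and `T` proves `≺`
transitive). -/
structure Basic (F : MFrame) : Prop where
  mp : ∀ {a b : F.S}, F.Prov (F.imp a b) → F.Prov a → F.Prov b
  ax1 : ∀ a b : F.S, F.Prov (F.imp a (F.imp b a))
  ax2 : ∀ a b c : F.S,
    F.Prov (F.imp (F.imp a (F.imp b c)) (F.imp (F.imp a b) (F.imp a c)))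
  ax3 : ∀ a b : F.S,
    F.Prov (F.imp (F.imp (F.neg a) (F.neg b)) (F.imp b a))
  nec : ∀ {a : F.S}, F.Prov a → F.Prov (F.box a)
  dist : ∀ a b : F.S,
    F.Prov (F.imp (F.box (F.imp a b)) (F.imp (F.box a) (F.box b)))
  d3 : ∀ a : F.S, F.Prov (F.imp (F.box a) (F.box (F.box a)))
  ltS_trans : ∀ ξ ζ η : Ordinal,
    F.Prov (F.imp (F.and (F.ltS ξ ζ) (F.ltS ζ η)) (F.ltS ξ η))
  ltS_intro : ∀ {ξ ζ : Ordinal}, ξ < ζ → F.Prov (F.ltS ξ ζ)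
  ltS_not : ∀ {ξ ζ : Ordinal}, ¬ ξ < ζ → F.Prov (F.neg (F.ltS ξ ζ))
  exF_intro : ∀ (G : F.S → F.S) (a : F.S), F.Prov (F.imp (G a) (F.exF G))
  exF_elim : ∀ (G : F.S → F.S) (c : F.S),
    (∀ a, F.Prov (F.imp (G a) c)) → F.Prov (F.imp (F.exF G) c)
  exO_intro : ∀ (G : Ordinal → F.S) (ξ : Ordinal), F.Prov (F.imp (G ξ) (F.exO G))
  exO_elim : ∀ (G : Ordinal → F.S) (c : F.S),
    (∀ ξ, F.Prov (F.imp (G ξ) c)) → F.Prov (F.imp (F.exO G) c)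
  exN_intro : ∀ (G : ℕ → F.S) (n : ℕ), F.Prov (F.imp (G n) (F.exN G))
  exN_elim : ∀ (G : ℕ → F.S) (c : F.S),
    (∀ n, F.Prov (F.imp (G n) c)) → F.Prov (F.imp (F.exN G) c)
  exL_intro : ∀ (G : List (Ordinal × F.S) → F.S) (ρ : List (Ordinal × F.S)),
    F.Prov (F.imp (G ρ) (F.exL G))
  exL_elim : ∀ (G : List (Ordinal × F.S) → F.S) (c : F.S),
    (∀ ρ, F.Prov (F.imp (G ρ) c)) → F.Prov (F.imp (F.exL G) c)

/-- `T` is a single-oracle (one-)Münchhausen theory for `Λ`, with candidate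
predicate `M ζ φ` (for `[ζ]_T φ`): `T` proves the defining recursion
`[ζ]φ ↔ □φ ∨ ∃ψ ∃ξ≺ζ (⟨ξ⟩ψ ∧ □(⟨ξ⟩ψ → φ))` for `ζ ≺ Λ`, proves
`ξ ≺ ζ → [ζ](ξ ≺ ζ)`, and proves that `0` is the `≺`-minimal element. -/
structure OneMunch (F : MFrame) (Λ : Ordinal.{0}) (M : Ordinal.{0} → F.S → F.S) : Prop where
  recEq : ∀ ζ < Λ, ∀ φ : F.S,
    F.Prov (F.iff (M ζ φ)
      (F.or (F.box φ)
        (F.exF fun ψ => F.exO fun ξ =>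
          F.and (F.ltS ξ ζ)
            (F.and (F.mdia M ξ ψ) (F.box (F.imp (F.mdia M ξ ψ) φ))))))
  ltS_box : ∀ {ξ ζ : Ordinal}, ξ < ζ →
    F.Prov (F.imp (F.ltS ξ ζ) (M ζ (F.ltS ξ ζ)))
  min_zero : ∀ ξ : Ordinal, F.Prov (F.neg (F.ltS ξ 0))

/-- The internal conjunction `⟨τ⟩_T σ` asserting of a finite sequence `ρ` of
pairs (ordinal `τ_i`, formula `σ(i)`) that every `⟨τ_i⟩_T σ(i)` holds. -/
def listDia (M : Ordinal.{0} → F.S → F.S) (ρ : List (Ordinal.{0} × F.S)) : F.S :=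
  ρ.foldr (fun p acc => F.and (F.mdia M p.1 p.2) acc) F.top

/-- The internal conjunction asserting `τ ≺ α`, i.e. every ordinal entry of
the sequence `ρ` is `≺ α`. -/
def listLt (ρ : List (Ordinal.{0} × F.S)) (α : Ordinal.{0}) : F.S :=
  ρ.foldr (fun p acc => F.and (F.ltS p.1 α) acc) F.top

/-- `T` is a (multiple-oracle) Münchhausen theory for `Λ` with candidate
predicate `M α φ`: `T` proves the recursion
`[α]φ ↔ □φ ∨ ∃σ ∃τ≺α (⟨τ⟩σ ∧ □(⟨τ⟩σ → φ))`, where the internal existential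
ranges over finite sequences `ρ` of pairs (which encodes the pair `σ, τ` of
equal-length sequences of formulas and of ordinals), together with
`ξ ≺ ζ → [ζ](ξ ≺ ζ)`. -/
structure MultiMunch (F : MFrame) (Λ : Ordinal.{0}) (M : Ordinal.{0} → F.S → F.S) : Prop where
  recEq : ∀ α < Λ, ∀ φ : F.S,
    F.Prov (F.iff (M α φ)
      (F.or (F.box φ)
        (F.exL fun ρ =>
          F.and (F.listLt ρ α)
            (F.and (F.listDia M ρ) (F.box (F.imp (F.listDia M ρ) φ))))))
  ltS_box : ∀ {ξ ζ : Ordinal}, ξ < ζ →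
    F.Prov (F.imp (F.ltS ξ ζ) (M ζ (F.ltS ξ ζ)))
  min_zero : ∀ ξ : Ordinal, F.Prov (F.neg (F.ltS ξ 0))

/-- Truth in the standard model: a predicate `Tr` making `T` sound, commuting
with the logical operations, with `Tr (□φ) ↔ T ⊢ φ` and with the internal
quantifiers and ordering evaluated standardly. -/
structure Truth (F : MFrame) (Tr : F.S → Prop) : Prop where
  sound : ∀ a : F.S, F.Prov a → Tr a
  bot : ¬ Tr F.bot
  imp : ∀ a b : F.S, Tr (F.imp a b) ↔ (Tr a → Tr b)
  box : ∀ a : F.S, Tr (F.box a) ↔ F.Prov a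
  ltS : ∀ ξ ζ : Ordinal, Tr (F.ltS ξ ζ) ↔ ξ < ζ
  exF : ∀ G : F.S → F.S, Tr (F.exF G) ↔ ∃ a, Tr (G a)
  exO : ∀ G : Ordinal → F.S, Tr (F.exO G) ↔ ∃ ξ, Tr (G ξ)
  exN : ∀ G : ℕ → F.S, Tr (F.exN G) ↔ ∃ n, Tr (G n)
  exL : ∀ G : List (Ordinal × F.S) → F.S, Tr (F.exL G) ↔ ∃ ρ, Tr (G ρ)

end MFrame


section Aux
variable {F : MFrame} {Tr : F.S → Prop}

lemma Tr_neg (hTr : F.Truth Tr) (a : F.S) : Tr (F.neg a) ↔ ¬ Tr a := by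
  unfold MFrame.neg
  rw [hTr.imp]
  exact ⟨fun h ha => hTr.bot (h ha), fun h ha => absurd ha h⟩

lemma Tr_and (hTr : F.Truth Tr) (a b : F.S) : Tr (F.and a b) ↔ Tr a ∧ Tr b := by
  unfold MFrame.and
  rw [Tr_neg hTr, hTr.imp, Tr_neg hTr]
  tauto

lemma Tr_or (hTr : F.Truth Tr) (a b : F.S) : Tr (F.or a b) ↔ Tr a ∨ Tr b := by
  unfold MFrame.or
  rw [hTr.imp, Tr_neg hTr]
  tauto

lemma Tr_iff (hTr : F.Truth Tr) (a b : F.S) : Tr (F.iff a b) ↔ (Tr a ↔ Tr b) := by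
  unfold MFrame.iff
  rw [Tr_and hTr, hTr.imp, hTr.imp]
  tauto

lemma Tr_top (hTr : F.Truth Tr) : Tr F.top := by
  unfold MFrame.top
  rw [Tr_neg hTr]; exact hTr.bot

end Aux

/-- for a sound single-oracle `Λ`-Münchhausen theory `T` with
predicate `[α]_T`, every consistency statement `⟨ξ⟩_T ⊤` with `ξ ≺ Λ` is true
in the standard model. -/
theorem oneMunch_consistency_true (F : MFrame) (hF : F.Basic)
    (Λ : Ordinal) (M : Ordinal → F.S → F.S) (hM : F.OneMunch Λ M)
    (Tr : F.S → Prop) (hTr : F.Truth Tr) :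
    ∀ ξ < Λ, Tr (F.mdia M ξ F.top) := by
  intro ξ hξ
  unfold MFrame.mdia
  rw [Tr_neg hTr]
  intro hM0
  have hrec := hTr.sound _ (hM.recEq ξ hξ (F.neg F.top))
  rw [Tr_iff hTr, Tr_or hTr] at hrec
  have hfalse : ¬ Tr (F.neg F.top) := by
    rw [Tr_neg hTr]; intro h; exact h (Tr_top hTr)
  rcases hrec.1 hM0 with h | h
  · rw [hTr.box] at h
    exact hfalse (hTr.sound _ h)
  · rw [hTr.exF] at h
    obtain ⟨ψ, h⟩ := h
    rw [hTr.exO] at h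
    obtain ⟨ζ, h⟩ := h
    rw [Tr_and hTr, Tr_and hTr] at h
    obtain ⟨_, hdia, hbox⟩ := h
    rw [hTr.box] at hbox
    have := hTr.sound _ hbox
    rw [hTr.imp] at this
    exact hfalse (this hdia)
end

section
/- Monotonicity of Münchhausen provability in the ordinal: if T is a Λ-one-Münchhausen theory with predicate [ξ]_T, then T ⊢ ∀ξ≺ζ≺Λ ∀φ ([ξ]_T φ → [ζ]_T φ), and moreover negative introspection holds: T ⊢ ∀ξ≺ζ≺Λ ∀φ (⟨ξ⟩_T φ → [ζ]_T ⟨ξ⟩_T φ). Neither fact requires induction. -/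
namespace MFrame

variable {F : MFrame} (hF : F.Basic)

include hF

lemma pid (a : F.S) : F.Prov (F.imp a a) :=
  hF.mp (hF.mp (hF.ax2 a (F.imp a a) a) (hF.ax1 a (F.imp a a))) (hF.ax1 a a)

lemma pk {a : F.S} (b : F.S) (h : F.Prov a) : F.Prov (F.imp b a) :=
  hF.mp (hF.ax1 a b) h

lemma impmp {a b c : F.S} (h1 : F.Prov (F.imp a (F.imp b c)))
    (h2 : F.Prov (F.imp a b)) : F.Prov (F.imp a c) :=
  hF.mp (hF.mp (hF.ax2 a b c) h1) h2

lemma phs {a b c : F.S} (h1 : F.Prov (F.imp a b)) (h2 : F.Prov (F.imp b c)) :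
    F.Prov (F.imp a c) :=
  impmp hF (pk hF a h2) h1

lemma pflip {a b c : F.S} (h : F.Prov (F.imp a (F.imp b c))) :
    F.Prov (F.imp b (F.imp a c)) :=
  phs hF (hF.ax1 b a) (hF.mp (hF.ax2 a b c) h)

lemma w2 {c : F.S} (a b : F.S) (h : F.Prov c) :
    F.Prov (F.imp a (F.imp b c)) := pk hF a (pk hF b h)

lemma h21 (a b : F.S) : F.Prov (F.imp a (F.imp b a)) := hF.ax1 a b

lemma h22 (a b : F.S) : F.Prov (F.imp a (F.imp b b)) := pk hF a (pid hF b)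

lemma app2 {a b c d : F.S} (h1 : F.Prov (F.imp a (F.imp b (F.imp c d))))
    (h2 : F.Prov (F.imp a (F.imp b c))) : F.Prov (F.imp a (F.imp b d)) :=
  impmp hF (impmp hF (pk hF a (hF.ax2 b c d)) h1) h2

lemma h31 (a b c : F.S) : F.Prov (F.imp a (F.imp b (F.imp c a))) :=
  phs hF (hF.ax1 a c) (hF.ax1 (F.imp c a) b)

lemma h32 (a b c : F.S) : F.Prov (F.imp a (F.imp b (F.imp c b))) :=
  pk hF a (hF.ax1 b c)

lemma h33 (a b c : F.S) : F.Prov (F.imp a (F.imp b (F.imp c c))) :=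
  pk hF a (pk hF b (pid hF c))

lemma app3 {a b c d e : F.S}
    (h1 : F.Prov (F.imp a (F.imp b (F.imp c (F.imp d e)))))
    (h2 : F.Prov (F.imp a (F.imp b (F.imp c d)))) :
    F.Prov (F.imp a (F.imp b (F.imp c e))) :=
  app2 hF (app2 hF (pk hF a (pk hF b (hF.ax2 c d e))) h1) h2

lemma efq (a : F.S) : F.Prov (F.imp F.bot a) :=
  hF.mp (hF.ax3 a F.bot) (pk hF (F.neg a) (pid hF F.bot))

lemma dni (a : F.S) : F.Prov (F.imp a (F.neg (F.neg a))) :=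
  pflip hF (pid hF (F.neg a))

lemma dne (a : F.S) : F.Prov (F.imp (F.neg (F.neg a)) a) :=
  hF.mp (hF.ax3 a (F.neg (F.neg a))) (dni hF (F.neg a))

lemma contrapose {a b : F.S} (h : F.Prov (F.imp a b)) :
    F.Prov (F.imp (F.neg b) (F.neg a)) :=
  pflip hF (phs hF h (dni hF b))

lemma and_intro_form (a b : F.S) :
    F.Prov (F.imp a (F.imp b (F.and a b))) :=
  app3 hF (app3 hF (h33 hF a b (F.imp a (F.neg b))) (h31 hF a b _)) (h32 hF a b _)

lemma and_fst (a b : F.S) : F.Prov (F.imp (F.and a b) a) :=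
  phs hF (contrapose hF (app3 hF (h31 hF (F.neg a) a b) (h32 hF (F.neg a) a b)))
    (dne hF a)

lemma and_snd (a b : F.S) : F.Prov (F.imp (F.and a b) b) :=
  phs hF (contrapose hF (hF.ax1 (F.neg b) a)) (dne hF b)

lemma and_intro2 {c a b : F.S} (h1 : F.Prov (F.imp c a)) (h2 : F.Prov (F.imp c b)) :
    F.Prov (F.imp c (F.and a b)) :=
  impmp hF (phs hF h1 (and_intro_form hF a b)) h2

lemma or_inl (a b : F.S) : F.Prov (F.imp a (F.or a b)) :=
  app2 hF (w2 hF a (F.neg a) (efq hF b)) (app2 hF (h22 hF a (F.neg a)) (h21 hF a (F.neg a)))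

lemma or_inr (a b : F.S) : F.Prov (F.imp b (F.or a b)) :=
  hF.ax1 b (F.neg a)

lemma or_elim {a b c : F.S} (h1 : F.Prov (F.imp a c)) (h2 : F.Prov (F.imp b c)) :
    F.Prov (F.imp (F.or a b) c) := by
  have s1 : F.Prov (F.imp (F.neg c) (F.imp (F.or a b) (F.neg a))) :=
    app2 hF (w2 hF _ _ (contrapose hF h1)) (h21 hF (F.neg c) (F.or a b))
  have s2 : F.Prov (F.imp (F.neg c) (F.imp (F.or a b) b)) :=
    app2 hF (h22 hF (F.neg c) (F.or a b)) s1
  have s3 : F.Prov (F.imp (F.neg c) (F.imp (F.or a b) c)) :=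
    app2 hF (w2 hF _ _ h2) s2
  have s4 : F.Prov (F.imp (F.neg c) (F.neg (F.or a b))) :=
    app2 hF (h21 hF (F.neg c) (F.or a b)) s3
  exact phs hF (phs hF (dni hF (F.or a b)) (contrapose hF s4)) (dne hF c)

lemma iff_mp {a b : F.S} (h : F.Prov (F.iff a b)) : F.Prov (F.imp a b) :=
  hF.mp (and_fst hF _ _) h

lemma iff_mpr {a b : F.S} (h : F.Prov (F.iff a b)) : F.Prov (F.imp b a) :=
  hF.mp (and_snd hF _ _) h

end MFrame

/-- monotonicity in the ordinal and negative introspection for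
one-Münchhausen provability: for `ξ ≺ ζ ≺ Λ`,
`T ⊢ [ξ]_T φ → [ζ]_T φ` and `T ⊢ ⟨ξ⟩_T φ → [ζ]_T ⟨ξ⟩_T φ`. -/
theorem oneMunch_mono_and_negIntro (F : MFrame) (hF : F.Basic)
    (Λ : Ordinal) (M : Ordinal → F.S → F.S) (hM : F.OneMunch Λ M) :
    ∀ ξ ζ : Ordinal, ξ < ζ → ζ < Λ → ∀ φ : F.S,
      F.Prov (F.imp (M ξ φ) (M ζ φ)) ∧
      F.Prov (F.imp (F.mdia M ξ φ) (M ζ (F.mdia M ξ φ))) := by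
  intro ξ ζ hξζ hζΛ φ
  have hξΛ : ξ < Λ := hξζ.trans hζΛ
  constructor
  · -- monotonicity
    have e1 := hM.recEq ξ hξΛ φ
    have e2 := hM.recEq ζ hζΛ φ
    refine MFrame.phs hF (MFrame.iff_mp hF e1)
      (MFrame.phs hF ?_ (MFrame.iff_mpr hF e2))
    refine MFrame.or_elim hF (MFrame.or_inl hF _ _) ?_
    refine MFrame.phs hF
      (hF.exF_elim _
        (F.exF fun ψ => F.exO fun η =>
          F.and (F.ltS η ζ)
            (F.and (F.mdia M η ψ) (F.box (F.imp (F.mdia M η ψ) φ))))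
        (fun ψ => ?_))
      (MFrame.or_inr hF _ _)
    refine hF.exO_elim _ _ (fun η => ?_)
    have step : F.Prov (F.imp
        (F.and (F.ltS η ξ) (F.and (F.mdia M η ψ) (F.box (F.imp (F.mdia M η ψ) φ))))
        (F.and (F.ltS η ζ) (F.and (F.mdia M η ψ) (F.box (F.imp (F.mdia M η ψ) φ))))) :=
      MFrame.and_intro2 hF
        (MFrame.phs hF
          (MFrame.and_intro2 hF (MFrame.and_fst hF _ _)
            (MFrame.pk hF _ (hF.ltS_intro hξζ)))
          (hF.ltS_trans η ξ ζ))
        (MFrame.and_snd hF _ _)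
    refine MFrame.phs hF step
      (MFrame.phs hF
        (hF.exO_intro (fun η => F.and (F.ltS η ζ)
          (F.and (F.mdia M η ψ) (F.box (F.imp (F.mdia M η ψ) φ)))) η)
        (hF.exF_intro (fun ψ => F.exO fun η => F.and (F.ltS η ζ)
          (F.and (F.mdia M η ψ) (F.box (F.imp (F.mdia M η ψ) φ)))) ψ))
  · -- negative introspection
    set D := F.mdia M ξ φ with hD
    have e := hM.recEq ζ hζΛ D
    refine MFrame.phs hF ?_ (MFrame.iff_mpr hF e)
    have inner : F.Prov (F.imp D
        (F.and (F.ltS ξ ζ) (F.and (F.mdia M ξ φ) (F.box (F.imp (F.mdia M ξ φ) D))))) :=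
      MFrame.and_intro2 hF (MFrame.pk hF D (hF.ltS_intro hξζ))
        (MFrame.and_intro2 hF (MFrame.pid hF D)
          (MFrame.pk hF D (hF.nec (MFrame.pid hF D))))
    refine MFrame.phs hF inner
      (MFrame.phs hF
        (MFrame.phs hF
          (hF.exO_intro (fun η => F.and (F.ltS η ζ)
            (F.and (F.mdia M η φ) (F.box (F.imp (F.mdia M η φ) D)))) ξ)
          (hF.exF_intro (fun ψ => F.exO fun η => F.and (F.ltS η ζ)
            (F.and (F.mdia M η ψ) (F.box (F.imp (F.mdia M η ψ) D)))) φ))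
        (MFrame.or_inr hF _ _))
end

section
/- Basic closure properties of Münchhausen provability without induction: for a Λ-one-Münchhausen theory T with predicate [ξ]_T, T proves: (1) ∀ξ ∀χ ([ξ]_T ⊥ → [ξ]_T χ); (2) ∀ξ ∀φ,χ ([ξ]_T φ ∧ □_T(φ→χ) → [ξ]_T χ); (3) ∀φ,ψ ([ξ]_T φ ∧ □_T ψ → [ξ]_T(φ∧ψ)); (4) ∃x [ξ]_T φ(ẋ) → [ξ]_T ∃x φ(x). -/
namespace MAux

variable {F : MFrame}

/-- Provability from a finite list of hypotheses, as a curried implication. -/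
def Provl (F : MFrame) (Γ : List F.S) (a : F.S) : Prop := F.Prov (Γ.foldr F.imp a)

lemma idd (hF : F.Basic) (a : F.S) : F.Prov (F.imp a a) :=
  hF.mp (hF.mp (hF.ax2 a (F.imp a a) a) (hF.ax1 a (F.imp a a))) (hF.ax1 a a)

lemma hs (hF : F.Basic) {a b c : F.S} (h1 : F.Prov (F.imp a b))
    (h2 : F.Prov (F.imp b c)) : F.Prov (F.imp a c) :=
  hF.mp (hF.mp (hF.ax2 a b c) (hF.mp (hF.ax1 (F.imp b c) a) h2)) h1

lemma swapm (hF : F.Basic) {p q r : F.S} (h : F.Prov (F.imp p (F.imp q r))) :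
    F.Prov (F.imp q (F.imp p r)) :=
  hs hF (hF.ax1 q p) (hF.mp (hF.ax2 p q r) h)

lemma bcomb (hF : F.Basic) (c p q : F.S) :
    F.Prov (F.imp (F.imp p q) (F.imp (F.imp c p) (F.imp c q))) :=
  hs hF (hF.ax1 (F.imp p q) c) (hF.ax2 c p q)

lemma dnegI (hF : F.Basic) (a : F.S) : F.Prov (F.imp a (F.neg (F.neg a))) :=
  swapm hF (idd hF (F.neg a))

lemma dne (hF : F.Basic) (a : F.S) : F.Prov (F.imp (F.neg (F.neg a)) a) :=
  hF.mp (hF.ax3 a (F.neg (F.neg a))) (dnegI hF (F.neg a))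

lemma distr (hF : F.Basic) (Γ : List F.S) (a b : F.S) :
    F.Prov (F.imp (Γ.foldr F.imp (F.imp a b))
      (F.imp (Γ.foldr F.imp a) (Γ.foldr F.imp b))) := by
  induction Γ with
  | nil => exact idd hF (F.imp a b)
  | cons c Γ ih =>
    exact hs hF (hF.mp (bcomb hF c (Γ.foldr F.imp (F.imp a b))
      (F.imp (Γ.foldr F.imp a) (Γ.foldr F.imp b))) ih)
      (hF.ax2 c (Γ.foldr F.imp a) (Γ.foldr F.imp b))

lemma dmp (hF : F.Basic) {Γ : List F.S} {a b : F.S}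
    (h1 : Provl F Γ (F.imp a b)) (h2 : Provl F Γ a) : Provl F Γ b :=
  hF.mp (hF.mp (distr hF Γ a b) h1) h2

lemma dax (hF : F.Basic) {a : F.S} : ∀ (Γ : List F.S), F.Prov a → Provl F Γ a
  | [], h => h
  | c :: Γ, h => hF.mp (hF.ax1 (Γ.foldr F.imp a) c) (dax hF Γ h)

lemma dhyp0 (hF : F.Basic) (a : F.S) : ∀ (Γ : List F.S), Provl F (a :: Γ) a
  | [] => idd hF a
  | c :: Γ => hs hF (dhyp0 hF a Γ) (hF.ax1 ((c :: Γ).tail.foldr F.imp a ) c)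

lemma dwk (hF : F.Basic) {Γ : List F.S} {b : F.S} (c : F.S)
    (h : Provl F Γ b) : Provl F (c :: Γ) b :=
  hF.mp (hF.ax1 (Γ.foldr F.imp b) c) h

lemma dintro {Γ : List F.S} {a b : F.S} (h : Provl F (Γ ++ [a]) b) :
    Provl F Γ (F.imp a b) := by
  simpa [Provl, List.foldr_append] using h

lemma dbc (hF : F.Basic) {Γ : List F.S} {a : F.S}
    (h : Provl F (Γ ++ [F.neg a]) F.bot) : Provl F Γ a :=
  dmp hF (dax hF Γ (dne hF a)) (dintro h)

lemma efq (hF : F.Basic) (a : F.S) : F.Prov (F.imp F.bot a) :=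
  dbc hF (Γ := [F.bot]) (dhyp0 hF F.bot [F.neg a])

lemma andI (hF : F.Basic) (a b : F.S) :
    F.Prov (F.imp a (F.imp b (F.and a b))) :=
  show Provl F [a, b, F.imp a (F.neg b)] F.bot from
    dmp hF
      (dmp hF (dwk hF a (dwk hF b (dhyp0 hF (F.imp a (F.neg b)) [])))
        (dhyp0 hF a [b, F.imp a (F.neg b)]))
      (dwk hF a (dhyp0 hF b [F.imp a (F.neg b)]))

lemma andI' (hF : F.Basic) (a b : F.S) :
    F.Prov (F.imp b (F.imp a (F.and a b))) :=
  show Provl F [b, a, F.imp a (F.neg b)] F.bot from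
    dmp hF
      (dmp hF (dwk hF b (dwk hF a (dhyp0 hF (F.imp a (F.neg b)) [])))
        (dwk hF b (dhyp0 hF a [F.imp a (F.neg b)])))
      (dhyp0 hF b [a, F.imp a (F.neg b)])

lemma andL (hF : F.Basic) (a b : F.S) : F.Prov (F.imp (F.and a b) a) := by
  have inner : Provl F (([F.and a b, F.neg a] ++ [a]) ++ [b]) F.bot :=
    dmp hF (dwk hF (F.and a b) (dhyp0 hF (F.neg a) [a, b]))
      (dwk hF (F.and a b) (dwk hF (F.neg a) (dhyp0 hF a [b])))
  have p2 : Provl F [F.and a b, F.neg a] (F.imp a (F.neg b)) :=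
    dintro (dintro inner)
  exact dbc hF (Γ := [F.and a b])
    (dmp hF (dhyp0 hF (F.and a b) [F.neg a]) p2)

lemma andR (hF : F.Basic) (a b : F.S) : F.Prov (F.imp (F.and a b) b) := by
  have inner : Provl F (([F.and a b, F.neg b] ++ [a]) ++ [b]) F.bot :=
    dmp hF (dwk hF (F.and a b) (dhyp0 hF (F.neg b) [a, b]))
      (dwk hF (F.and a b) (dwk hF (F.neg b) (dwk hF a (dhyp0 hF b []))))
  have p2 : Provl F [F.and a b, F.neg b] (F.imp a (F.neg b)) :=
    dintro (dintro inner)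
  exact dbc hF (Γ := [F.and a b])
    (dmp hF (dhyp0 hF (F.and a b) [F.neg b]) p2)

lemma orInl (hF : F.Basic) (a b : F.S) : F.Prov (F.imp a (F.or a b)) :=
  show Provl F [a, F.neg a] b from
    dmp hF (dax hF _ (efq hF b))
      (dmp hF (dwk hF a (dhyp0 hF (F.neg a) [])) (dhyp0 hF a [F.neg a]))

lemma orInr (hF : F.Basic) (a b : F.S) : F.Prov (F.imp b (F.or a b)) :=
  hF.ax1 b (F.neg a)

lemma orE (hF : F.Basic) {a b c : F.S} (h1 : F.Prov (F.imp a c))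
    (h2 : F.Prov (F.imp b c)) : F.Prov (F.imp (F.or a b) c) := by
  have inner : Provl F ([F.or a b, F.neg c] ++ [a]) F.bot :=
    dmp hF (dwk hF (F.or a b) (dhyp0 hF (F.neg c) [a]))
      (dmp hF (dax hF _ h1)
        (dwk hF (F.or a b) (dwk hF (F.neg c) (dhyp0 hF a []))))
  have na : Provl F [F.or a b, F.neg c] (F.neg a) := dintro inner
  have hb : Provl F [F.or a b, F.neg c] b :=
    dmp hF (dhyp0 hF (F.or a b) [F.neg c]) na
  have hc : Provl F [F.or a b, F.neg c] c := dmp hF (dax hF _ h2) hb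
  exact dbc hF (Γ := [F.or a b])
    (dmp hF (dwk hF (F.or a b) (dhyp0 hF (F.neg c) [])) hc)

lemma iff1 (hF : F.Basic) {a b : F.S} (h : F.Prov (F.iff a b)) :
    F.Prov (F.imp a b) := hF.mp (andL hF (F.imp a b) (F.imp b a)) h

lemma iff2 (hF : F.Basic) {a b : F.S} (h : F.Prov (F.iff a b)) :
    F.Prov (F.imp b a) := hF.mp (andR hF (F.imp a b) (F.imp b a)) h

lemma boxK (hF : F.Basic) {a b : F.S} (h : F.Prov (F.imp a b)) :
    F.Prov (F.imp (F.box a) (F.box b)) := hF.mp (hF.dist a b) (hF.nec h)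

lemma boxTrans (hF : F.Basic) (d p q : F.S) :
    F.Prov (F.imp (F.box (F.imp p q))
      (F.imp (F.box (F.imp d p)) (F.box (F.imp d q)))) :=
  hs hF (boxK hF (bcomb hF d p q)) (hF.dist (F.imp d p) (F.imp d q))

end MAux

/-- basic closure properties of one-Münchhausen provability,
provable without induction: (1) ex falso `[ξ]⊥ → [ξ]χ`; (2) closure under
provable implication; (3) `[ξ]φ ∧ □ψ → [ξ](φ∧ψ)`; (4) the Barcan-type fact
`∃x [ξ]φ(ẋ) → [ξ]∃x φ(x)`. -/
theorem oneMunch_basic_closure (F : MFrame) (hF : F.Basic)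
    (Λ : Ordinal) (M : Ordinal → F.S → F.S) (hM : F.OneMunch Λ M) :
    ∀ ξ < Λ,
      (∀ χ : F.S, F.Prov (F.imp (M ξ F.bot) (M ξ χ))) ∧
      (∀ φ χ : F.S,
        F.Prov (F.imp (F.and (M ξ φ) (F.box (F.imp φ χ))) (M ξ χ))) ∧
      (∀ φ ψ : F.S,
        F.Prov (F.imp (F.and (M ξ φ) (F.box ψ)) (M ξ (F.and φ ψ)))) ∧
      (∀ P : ℕ → F.S,
        F.Prov (F.imp (F.exN fun x => M ξ (P x)) (M ξ (F.exN P)))) := by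
  intro ξ hξ
  open MAux in
  -- the curried form of closure under provable implication (statement 2)
  have key : ∀ φ χ : F.S,
      F.Prov (F.imp (M ξ φ) (F.imp (F.box (F.imp φ χ)) (M ξ χ))) := by
    intro φ χ
    set B := F.box (F.imp φ χ) with hB
    -- the bodies of the recursion for φ and for χ
    set Gφ : F.S → F.S := fun ψ => F.exO fun η =>
      F.and (F.ltS η ξ)
        (F.and (F.mdia M η ψ) (F.box (F.imp (F.mdia M η ψ) φ))) with hGφ
    set Gχ : F.S → F.S := fun ψ => F.exO fun η =>
      F.and (F.ltS η ξ)
        (F.and (F.mdia M η ψ) (F.box (F.imp (F.mdia M η ψ) χ))) with hGχ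
    set Rφ := F.or (F.box φ) (F.exF Gφ) with hRφ
    set Rχ := F.or (F.box χ) (F.exF Gχ) with hRχ
    -- Step A: □φ → (B → Rχ)
    have stepA : F.Prov (F.imp (F.box φ) (F.imp B Rχ)) := by
      have bχ : Provl F [F.box φ, B] (F.box χ) :=
        dmp hF (dmp hF (dax hF _ (hF.dist φ χ)) (dwk hF _ (dhyp0 hF B [])))
          (dhyp0 hF (F.box φ) [B])
      exact dmp hF (dax hF _ (orInl hF (F.box χ) (F.exF Gχ))) bχ
    -- Step B: ∃ψ∃η≺ξ(…φ…) → (B → Rχ)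
    have stepB : F.Prov (F.imp (F.exF Gφ) (F.imp B Rχ)) := by
      apply hF.exF_elim
      intro ψ
      apply hF.exO_elim
      intro η
      set Hφ := F.and (F.ltS η ξ)
        (F.and (F.mdia M η ψ) (F.box (F.imp (F.mdia M η ψ) φ))) with hHφ
      set Hχ := F.and (F.ltS η ξ)
        (F.and (F.mdia M η ψ) (F.box (F.imp (F.mdia M η ψ) χ))) with hHχ
      show Provl F [Hφ, B] Rχ
      have hH : Provl F [Hφ, B] Hφ := dhyp0 hF Hφ [B]
      have hBh : Provl F [Hφ, B] B := dwk hF Hφ (dhyp0 hF B [])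
      have lt : Provl F [Hφ, B] (F.ltS η ξ) :=
        dmp hF (dax hF _ (andL hF _ _)) hH
      have rest : Provl F [Hφ, B]
          (F.and (F.mdia M η ψ) (F.box (F.imp (F.mdia M η ψ) φ))) :=
        dmp hF (dax hF _ (andR hF _ _)) hH
      have dia : Provl F [Hφ, B] (F.mdia M η ψ) :=
        dmp hF (dax hF _ (andL hF _ _)) rest
      have bx : Provl F [Hφ, B] (F.box (F.imp (F.mdia M η ψ) φ)) :=
        dmp hF (dax hF _ (andR hF _ _)) rest
      have bx' : Provl F [Hφ, B] (F.box (F.imp (F.mdia M η ψ) χ)) :=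
        dmp hF (dmp hF (dax hF _ (boxTrans hF (F.mdia M η ψ) φ χ)) hBh) bx
      have hHχ' : Provl F [Hφ, B] Hχ :=
        dmp hF (dmp hF (dax hF _ (andI hF _ _)) lt)
          (dmp hF (dmp hF (dax hF _ (andI hF _ _)) dia) bx')
      have e1 : Provl F [Hφ, B] (Gχ ψ) :=
        dmp hF (dax hF _ (hF.exO_intro (fun η => F.and (F.ltS η ξ)
          (F.and (F.mdia M η ψ) (F.box (F.imp (F.mdia M η ψ) χ)))) η)) hHχ'
      have e2 : Provl F [Hφ, B] (F.exF Gχ) :=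
        dmp hF (dax hF _ (hF.exF_intro Gχ ψ)) e1
      exact dmp hF (dax hF _ (orInr hF (F.box χ) (F.exF Gχ))) e2
    have big : F.Prov (F.imp Rφ (F.imp B Rχ)) := orE hF stepA stepB
    have p1 : F.Prov (F.imp (M ξ φ) Rφ) := iff1 hF (hM.recEq ξ hξ φ)
    have p2 : F.Prov (F.imp Rχ (M ξ χ)) := iff2 hF (hM.recEq ξ hξ χ)
    have lift : F.Prov (F.imp (F.imp B Rχ) (F.imp B (M ξ χ))) :=
      hF.mp (bcomb hF B Rχ (M ξ χ)) p2
    exact hs hF (hs hF p1 big) lift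
  refine ⟨?_, ?_, ?_, ?_⟩
  · -- (1) ex falso
    intro χ
    show Provl F [M ξ F.bot] (M ξ χ)
    exact dmp hF
      (dmp hF (dax hF _ (key F.bot χ)) (dhyp0 hF (M ξ F.bot) []))
      (dax hF _ (hF.nec (efq hF χ)))
  · -- (2) closure under provable implication, conjunctive form
    intro φ χ
    show Provl F [F.and (M ξ φ) (F.box (F.imp φ χ))] (M ξ χ)
    have h0 := dhyp0 hF (F.and (M ξ φ) (F.box (F.imp φ χ))) []
    exact dmp hF
      (dmp hF (dax hF _ (key φ χ)) (dmp hF (dax hF _ (andL hF _ _)) h0))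
      (dmp hF (dax hF _ (andR hF _ _)) h0)
  · -- (3) absorbing a boxed conjunct
    intro φ ψ
    show Provl F [F.and (M ξ φ) (F.box ψ)] (M ξ (F.and φ ψ))
    have h0 := dhyp0 hF (F.and (M ξ φ) (F.box ψ)) []
    have mφ : Provl F [F.and (M ξ φ) (F.box ψ)] (M ξ φ) :=
      dmp hF (dax hF _ (andL hF _ _)) h0
    have bψ : Provl F [F.and (M ξ φ) (F.box ψ)] (F.box ψ) :=
      dmp hF (dax hF _ (andR hF _ _)) h0
    have bimp : Provl F [F.and (M ξ φ) (F.box ψ)]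
        (F.box (F.imp φ (F.and φ ψ))) :=
      dmp hF (dax hF _ (boxK hF (andI' hF φ ψ))) bψ
    exact dmp hF (dmp hF (dax hF _ (key φ (F.and φ ψ))) mφ) bimp
  · -- (4) Barcan-type fact for internal numerical existentials
    intro P
    apply hF.exN_elim
    intro n
    show Provl F [M ξ (P n)] (M ξ (F.exN P))
    exact dmp hF
      (dmp hF (dax hF _ (key (P n) (F.exN P))) (dhyp0 hF (M ξ (P n)) []))
      (dax hF _ (hF.nec (hF.exN_intro P n)))
end

section
/- Uniqueness of Münchhausen predicates at finite levels: if T is a sound Λ-one-Münchhausen theory (Λ ≥ ω) with two Münchhausen provability predicates [α]_T and [α]'_T both satisfying the defining recursion, then for every (external) natural number n, T ⊢ ∀φ ([n]_T φ ↔ [n]'_T φ). The proof is by external induction on n, using necessitation to import the induction hypothesis under □_T. -/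
section Toolkit

open MFrame

variable {F : MFrame} (hF : F.Basic)
include hF

private lemma P_mpd {a b c : F.S} (h1 : F.Prov (F.imp a (F.imp b c)))
    (h2 : F.Prov (F.imp a b)) : F.Prov (F.imp a c) :=
  hF.mp (hF.mp (hF.ax2 a b c) h1) h2

private lemma P_lift {a : F.S} (b : F.S) (h : F.Prov a) : F.Prov (F.imp b a) :=
  hF.mp (hF.ax1 a b) h

private lemma P_id (a : F.S) : F.Prov (F.imp a a) :=
  P_mpd hF (hF.ax1 a (F.imp a a)) (hF.ax1 a a)

private lemma P_trans {a b c : F.S} (h1 : F.Prov (F.imp a b)) (h2 : F.Prov (F.imp b c)) :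
    F.Prov (F.imp a c) :=
  P_mpd hF (P_lift hF a h2) h1

private lemma P_lift2 {a : F.S} (b c : F.S) (h : F.Prov a) :
    F.Prov (F.imp b (F.imp c a)) :=
  P_lift hF b (P_lift hF c h)

private lemma P_mpd2 {a b c d : F.S} (h1 : F.Prov (F.imp a (F.imp b (F.imp c d))))
    (h2 : F.Prov (F.imp a (F.imp b c))) : F.Prov (F.imp a (F.imp b d)) :=
  P_mpd hF (P_trans hF h1 (hF.ax2 b c d)) h2

private lemma P_mpd3 {a b c d e : F.S}
    (h1 : F.Prov (F.imp a (F.imp b (F.imp c (F.imp d e)))))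
    (h2 : F.Prov (F.imp a (F.imp b (F.imp c d)))) :
    F.Prov (F.imp a (F.imp b (F.imp c e))) :=
  P_mpd2 hF (P_mpd2 hF (P_lift2 hF a b (hF.ax2 c d e)) h1) h2

private lemma P_dni (a : F.S) : F.Prov (F.imp a (F.neg (F.neg a))) :=
  P_mpd2 hF (P_lift hF a (P_id hF (F.neg a))) (hF.ax1 a (F.neg a))

private lemma P_efq (b : F.S) : F.Prov (F.imp F.bot b) :=
  hF.mp (hF.ax3 b F.bot) (P_lift hF (F.neg b) (P_id hF F.bot))

private lemma P_dne (a : F.S) : F.Prov (F.imp (F.neg (F.neg a)) a) :=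
  hF.mp (hF.ax3 a (F.neg (F.neg a))) (P_dni hF (F.neg a))

private lemma P_contrap {a b : F.S} (h : F.Prov (F.imp a b)) :
    F.Prov (F.imp (F.neg b) (F.neg a)) :=
  P_mpd2 hF (hF.ax1 (F.neg b) a) (P_lift hF (F.neg b) h)

private lemma P_or_inl (a b : F.S) : F.Prov (F.imp a (F.or a b)) :=
  P_mpd2 hF (P_lift2 hF a (F.neg a) (P_efq hF b)) (P_dni hF a)

private lemma P_or_inr (a b : F.S) : F.Prov (F.imp b (F.or a b)) :=
  hF.ax1 b (F.neg a)

private lemma P_or_elim {a b c : F.S} (h1 : F.Prov (F.imp a c)) (h2 : F.Prov (F.imp b c)) :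
    F.Prov (F.imp (F.or a b) c) := by
  have t1 : F.Prov (F.imp (F.or a b) (F.imp (F.neg c) (F.neg a))) :=
    P_lift hF _ (P_contrap hF h1)
  have t2 : F.Prov (F.imp (F.or a b) (F.imp (F.neg c) (F.neg b))) :=
    P_lift hF _ (P_contrap hF h2)
  have t3 : F.Prov (F.imp (F.or a b) (F.imp (F.neg c) (F.imp (F.neg a) b))) :=
    hF.ax1 (F.or a b) (F.neg c)
  have t4 : F.Prov (F.imp (F.or a b) (F.imp (F.neg c) b)) := P_mpd2 hF t3 t1
  have t5 : F.Prov (F.imp (F.or a b) (F.imp (F.neg c) F.bot)) := P_mpd2 hF t2 t4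
  exact P_trans hF t5 (P_dne hF c)

private lemma P_absurd (a c : F.S) : F.Prov (F.imp (F.neg a) (F.imp a c)) := by
  have t : F.Prov (F.imp (F.neg a) (F.imp a F.bot)) :=
    P_mpd2 hF (hF.ax1 (F.neg a) a) (P_lift hF (F.neg a) (P_id hF a))
  exact P_mpd2 hF (P_lift2 hF (F.neg a) a (P_efq hF c)) t

private lemma P_and_elim1 (a b : F.S) : F.Prov (F.imp (F.and a b) a) :=
  P_trans hF (P_contrap hF (P_absurd hF a (F.neg b))) (P_dne hF a)

private lemma P_and_elim2 (a b : F.S) : F.Prov (F.imp (F.and a b) b) :=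
  P_trans hF (P_contrap hF (hF.ax1 (F.neg b) a)) (P_dne hF b)

private lemma P_and_intro (a b : F.S) : F.Prov (F.imp a (F.imp b (F.and a b))) := by
  set c : F.S := F.imp a (F.neg b) with hc
  have p31 : F.Prov (F.imp a (F.imp b (F.imp c a))) :=
    P_trans hF (hF.ax1 a c) (hF.ax1 (F.imp c a) b)
  have p32 : F.Prov (F.imp a (F.imp b (F.imp c b))) := P_lift hF a (hF.ax1 b c)
  have p33 : F.Prov (F.imp a (F.imp b (F.imp c c))) := P_lift2 hF a b (P_id hF c)
  have t1 : F.Prov (F.imp a (F.imp b (F.imp c (F.neg b)))) := P_mpd3 hF p33 p31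
  exact P_mpd3 hF t1 p32

private lemma P_andI {a b : F.S} (h1 : F.Prov a) (h2 : F.Prov b) : F.Prov (F.and a b) :=
  hF.mp (hF.mp (P_and_intro hF a b) h1) h2

private lemma P_iffI {a b : F.S} (h1 : F.Prov (F.imp a b)) (h2 : F.Prov (F.imp b a)) :
    F.Prov (F.iff a b) := P_andI hF h1 h2

private lemma P_iff_mp {a b : F.S} (h : F.Prov (F.iff a b)) : F.Prov (F.imp a b) :=
  hF.mp (P_and_elim1 hF _ _) h

private lemma P_iff_mpr {a b : F.S} (h : F.Prov (F.iff a b)) : F.Prov (F.imp b a) :=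
  hF.mp (P_and_elim2 hF _ _) h

private lemma P_and_mono {a a' b b' : F.S} (h1 : F.Prov (F.imp a a'))
    (h2 : F.Prov (F.imp b b')) : F.Prov (F.imp (F.and a b) (F.and a' b')) :=
  P_mpd hF (P_mpd hF (P_lift hF _ (P_and_intro hF a' b'))
    (P_trans hF (P_and_elim1 hF a b) h1)) (P_trans hF (P_and_elim2 hF a b) h2)

private lemma P_or_mono {a a' b b' : F.S} (h1 : F.Prov (F.imp a a'))
    (h2 : F.Prov (F.imp b b')) : F.Prov (F.imp (F.or a b) (F.or a' b')) :=
  P_or_elim hF (P_trans hF h1 (P_or_inl hF a' b')) (P_trans hF h2 (P_or_inr hF a' b'))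

private lemma P_imp_mono {a a' b b' : F.S} (h1 : F.Prov (F.imp a' a))
    (h2 : F.Prov (F.imp b b')) : F.Prov (F.imp (F.imp a b) (F.imp a' b')) := by
  have q1 : F.Prov (F.imp (F.imp a b) (F.imp a' a)) := P_lift hF _ h1
  have q2 : F.Prov (F.imp (F.imp a b) (F.imp a' (F.imp a b))) := hF.ax1 (F.imp a b) a'
  have q3 : F.Prov (F.imp (F.imp a b) (F.imp a' b)) := P_mpd2 hF q2 q1
  exact P_mpd2 hF (P_lift2 hF (F.imp a b) a' h2) q3

private lemma P_box_mono {a b : F.S} (h : F.Prov (F.imp a b)) :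
    F.Prov (F.imp (F.box a) (F.box b)) :=
  hF.mp (hF.dist a b) (hF.nec h)

/-- One direction of the uniqueness, from the induction hypothesis at all
smaller natural levels. -/
private lemma munch_dir {Λ : Ordinal} (hΛ : Ordinal.omega0 ≤ Λ)
    {M M' : Ordinal → F.S → F.S}
    (hM : F.OneMunch Λ M) (hM' : F.OneMunch Λ M') (n : ℕ)
    (IH : ∀ m : ℕ, m < n → ∀ χ : F.S,
      F.Prov (F.imp (M (m : Ordinal) χ) (M' (m : Ordinal) χ)) ∧
      F.Prov (F.imp (M' (m : Ordinal) χ) (M (m : Ordinal) χ)))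
    (φ : F.S) : F.Prov (F.imp (M (n : Ordinal) φ) (M' (n : Ordinal) φ)) := by
  have hnΛ : (n : Ordinal) < Λ := lt_of_lt_of_le (Ordinal.nat_lt_omega0 n) hΛ
  have r := hM.recEq (n : Ordinal) hnΛ φ
  have r' := hM'.recEq (n : Ordinal) hnΛ φ
  set G : F.S → F.S := fun ψ => F.exO fun ξ =>
    F.and (F.ltS ξ (n : Ordinal))
      (F.and (F.mdia M ξ ψ) (F.box (F.imp (F.mdia M ξ ψ) φ))) with hG
  set G' : F.S → F.S := fun ψ => F.exO fun ξ =>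
    F.and (F.ltS ξ (n : Ordinal))
      (F.and (F.mdia M' ξ ψ) (F.box (F.imp (F.mdia M' ξ ψ) φ))) with hG'
  have hex : F.Prov (F.imp (F.exF G) (F.exF G')) := by
    refine hF.exF_elim G (F.exF G') (fun ψ => ?_)
    refine P_trans hF ?_ (hF.exF_intro G' ψ)
    refine hF.exO_elim _ (G' ψ) (fun ξ => ?_)
    by_cases hξ : ξ < (n : Ordinal)
    · obtain ⟨m, rfl⟩ := Ordinal.lt_omega0.mp (hξ.trans (Ordinal.nat_lt_omega0 n))
      have hmn : m < n := by exact_mod_cast hξ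
      have dmono : F.Prov (F.imp (F.mdia M (m : Ordinal) ψ) (F.mdia M' (m : Ordinal) ψ)) :=
        P_contrap hF ((IH m hmn (F.neg ψ)).2)
      have dmono' : F.Prov (F.imp (F.mdia M' (m : Ordinal) ψ) (F.mdia M (m : Ordinal) ψ)) :=
        P_contrap hF ((IH m hmn (F.neg ψ)).1)
      have bmono : F.Prov (F.imp (F.box (F.imp (F.mdia M (m : Ordinal) ψ) φ))
          (F.box (F.imp (F.mdia M' (m : Ordinal) ψ) φ))) :=
        P_box_mono hF (P_imp_mono hF dmono' (P_id hF φ))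
      refine P_trans hF (P_and_mono hF (P_id hF (F.ltS (m : Ordinal) (n : Ordinal)))
        (P_and_mono hF dmono bmono)) ?_
      simpa only [hG'] using hF.exO_intro (fun ξ =>
        F.and (F.ltS ξ (n : Ordinal))
          (F.and (F.mdia M' ξ ψ) (F.box (F.imp (F.mdia M' ξ ψ) φ)))) (m : Ordinal)
    · have hnot : F.Prov (F.neg (F.ltS ξ (n : Ordinal))) := hF.ltS_not hξ
      have hbot : F.Prov (F.imp
          (F.and (F.ltS ξ (n : Ordinal))
            (F.and (F.mdia M ξ ψ) (F.box (F.imp (F.mdia M ξ ψ) φ)))) F.bot) :=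
        P_mpd hF (P_lift hF _ hnot) (P_and_elim1 hF _ _)
      exact P_trans hF hbot (P_efq hF _)
  have step : F.Prov (F.imp (F.or (F.box φ) (F.exF G)) (F.or (F.box φ) (F.exF G'))) :=
    P_or_mono hF (P_id hF (F.box φ)) hex
  exact P_trans hF (P_iff_mp hF r) (P_trans hF step (P_iff_mpr hF r'))

end Toolkit

/-- uniqueness of Münchhausen predicates at finite levels: if a
sound `Λ`-one-Münchhausen theory `T` (with `Λ ≥ ω`) has two Münchhausen
provability predicates `[α]_T` and `[α]'_T`, both satisfying the defining
recursion, then for every external natural number `n`,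
`T ⊢ ∀φ ([n]_T φ ↔ [n]'_T φ)`. -/
theorem oneMunch_unique_finite_levels (F : MFrame) (hF : F.Basic)
    (Λ : Ordinal) (hΛ : Ordinal.omega0 ≤ Λ)
    (M M' : Ordinal → F.S → F.S)
    (hM : F.OneMunch Λ M) (hM' : F.OneMunch Λ M')
    (Tr : F.S → Prop) (hTr : F.Truth Tr) :
    ∀ n : ℕ, ∀ φ : F.S, F.Prov (F.iff (M (n : Ordinal) φ) (M' (n : Ordinal) φ)) := by
  have key : ∀ n : ℕ, ∀ φ : F.S,
      F.Prov (F.imp (M (n : Ordinal) φ) (M' (n : Ordinal) φ)) ∧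
      F.Prov (F.imp (M' (n : Ordinal) φ) (M (n : Ordinal) φ)) := by
    intro n
    induction n using Nat.strong_induction_on with
    | _ n IH =>
      intro φ
      constructor
      · exact munch_dir hF hΛ hM hM' n (fun m hm χ => IH m hm χ) φ
      · exact munch_dir hF hΛ hM' hM n (fun m hm χ => ⟨(IH m hm χ).2, (IH m hm χ).1⟩) φ
  exact fun n φ => P_iffI hF (key n φ).1 (key n φ).2
end

section
/- Distribution for multiple-oracle Münchhausen provability without induction: if T is a Λ-Münchhausen theory with predicate [α]_T defined via sequences of oracles, then T ⊢ ∀α≺Λ ∀φ,ψ ( [α]_T(φ→ψ) → ([α]_T φ → [α]_T ψ) ). The proof concatenates the two oracle sequences. -/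
section Aux

open MFrame

variable {F : MFrame}

/-- Derivability from a finite list of hypotheses. -/
inductive Der (F : MFrame) : List F.S → F.S → Prop
  | hyp {Γ} {a : F.S} : a ∈ Γ → Der F Γ a
  | prov {Γ} {a : F.S} : F.Prov a → Der F Γ a
  | mp {Γ} {a b : F.S} : Der F Γ (F.imp a b) → Der F Γ a → Der F Γ b

lemma p_id (hF : F.Basic) (a : F.S) : F.Prov (F.imp a a) :=
  hF.mp (hF.mp (hF.ax2 a (F.imp a a) a) (hF.ax1 a (F.imp a a))) (hF.ax1 a a)

lemma Der.weak {Γ Γ' : List F.S} {a : F.S} (h : Der F Γ a) (hs : Γ ⊆ Γ') :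
    Der F Γ' a := by
  induction h with
  | hyp h => exact .hyp (hs h)
  | prov h => exact .prov h
  | mp _ _ ih1 ih2 => exact .mp ih1 ih2

lemma ded' (hF : F.Basic) {Γ : List F.S} {b : F.S} (h : Der F Γ b) :
    ∀ (a : F.S) (Γ' : List F.S), Γ ⊆ a :: Γ' → Der F Γ' (F.imp a b) := by
  induction h with
  | hyp hmem =>
    intro a Γ' hs
    rcases List.mem_cons.1 (hs hmem) with heq | hmem'
    · subst heq; exact .prov (p_id hF _)
    · exact .mp (.prov (hF.ax1 _ a)) (.hyp hmem')
  | prov hp => exact fun a Γ' _ => .mp (.prov (hF.ax1 _ a)) (.prov hp)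
  | mp _ _ ih1 ih2 =>
    exact fun a Γ' hs =>
      .mp (.mp (.prov (hF.ax2 _ _ _)) (ih1 a Γ' hs)) (ih2 a Γ' hs)

lemma ded (hF : F.Basic) {Γ : List F.S} {a b : F.S} (h : Der F (a :: Γ) b) :
    Der F Γ (F.imp a b) := ded' hF h a Γ (List.Subset.refl _)

lemma derToProv (hF : F.Basic) {a : F.S} (h : Der F [] a) : F.Prov a := by
  induction h with
  | hyp h => simp at h
  | prov h => exact h
  | mp _ _ ih1 ih2 => exact hF.mp ih1 ih2

lemma p_efq (hF : F.Basic) (a : F.S) : F.Prov (F.imp F.bot a) :=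
  hF.mp (hF.ax3 a F.bot) (derToProv hF (ded hF (.prov (p_id hF F.bot))))

lemma p_dni (hF : F.Basic) (a : F.S) : F.Prov (F.imp a (F.neg (F.neg a))) :=
  derToProv hF (ded hF (ded hF (.mp (.hyp (.head _)) (.hyp (.tail _ (.head _))))))

lemma p_dne (hF : F.Basic) (a : F.S) : F.Prov (F.imp (F.neg (F.neg a)) a) :=
  hF.mp (hF.ax3 a (F.neg (F.neg a))) (p_dni hF (F.neg a))

/-- Proof by contradiction at the `Der` level. -/
lemma byContra' (hF : F.Basic) {Γ : List F.S} {a : F.S}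
    (h : Der F (F.neg a :: Γ) F.bot) : Der F Γ a :=
  .mp (.prov (p_dne hF a)) (ded hF h)

lemma p_and_intro (hF : F.Basic) (a b : F.S) :
    F.Prov (F.imp a (F.imp b (F.and a b))) :=
  derToProv hF (ded hF (ded hF (ded hF
    (.mp (.mp (.hyp (.head _)) (.hyp (.tail _ (.tail _ (.head _)))))
      (.hyp (.tail _ (.head _)))))))

lemma p_and_left (hF : F.Basic) (a b : F.S) : F.Prov (F.imp (F.and a b) a) :=
  derToProv hF (ded hF (byContra' hF
    (.mp (.hyp (.tail _ (.head _)))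
      (ded hF (.mp (.prov (p_efq hF (F.neg b)))
        (.mp (.hyp (.tail _ (.head _))) (.hyp (.head _))))))))

lemma p_and_right (hF : F.Basic) (a b : F.S) : F.Prov (F.imp (F.and a b) b) :=
  derToProv hF (ded hF (byContra' hF
    (.mp (.hyp (.tail _ (.head _)))
      (ded hF (.hyp (.tail _ (.head _)))))))

lemma p_or_inl (hF : F.Basic) (a b : F.S) : F.Prov (F.imp a (F.or a b)) :=
  derToProv hF (ded hF (ded hF
    (.mp (.prov (p_efq hF b))
      (.mp (.hyp (.head _)) (.hyp (.tail _ (.head _)))))))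

lemma p_or_inr (hF : F.Basic) (a b : F.S) : F.Prov (F.imp b (F.or a b)) :=
  hF.ax1 b (F.neg a)

lemma p_or_elim (hF : F.Basic) (a b c : F.S) :
    F.Prov (F.imp (F.or a b) (F.imp (F.imp a c) (F.imp (F.imp b c) c))) := by
  refine derToProv hF (ded hF (ded hF (ded hF (byContra' hF ?_))))
  set Γ : List F.S := [F.neg c, F.imp b c, F.imp a c, F.or a b] with hΓ
  have nc : Der F Γ (F.neg c) := .hyp (.head _)
  have g : Der F Γ (F.imp b c) := .hyp (.tail _ (.head _))
  have f : Der F Γ (F.imp a c) := .hyp (.tail _ (.tail _ (.head _)))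
  have h : Der F Γ (F.or a b) := .hyp (.tail _ (.tail _ (.tail _ (.head _))))
  have na : Der F Γ (F.neg a) := ded hF
    (.mp (nc.weak (by intro x hx; exact .tail _ hx))
      (.mp (f.weak (by intro x hx; exact .tail _ hx)) (.hyp (.head _))))
  exact .mp nc (.mp g (.mp h na))

/-- `or`-elimination at the `Der` level. -/
lemma orElim (hF : F.Basic) {Γ : List F.S} {a b c : F.S}
    (h : Der F Γ (F.or a b)) (hA : Der F (a :: Γ) c) (hB : Der F (b :: Γ) c) :
    Der F Γ c :=
  .mp (.mp (.mp (.prov (p_or_elim hF a b c)) h) (ded hF hA)) (ded hF hB)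

lemma andL (hF : F.Basic) {Γ : List F.S} {a b : F.S} (h : Der F Γ (F.and a b)) :
    Der F Γ a := .mp (.prov (p_and_left hF a b)) h

lemma andR (hF : F.Basic) {Γ : List F.S} {a b : F.S} (h : Der F Γ (F.and a b)) :
    Der F Γ b := .mp (.prov (p_and_right hF a b)) h

lemma andI (hF : F.Basic) {Γ : List F.S} {a b : F.S} (h1 : Der F Γ a)
    (h2 : Der F Γ b) : Der F Γ (F.and a b) :=
  .mp (.mp (.prov (p_and_intro hF a b)) h1) h2

lemma p_swap (hF : F.Basic) (a b c : F.S) :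
    F.Prov (F.imp (F.imp a (F.imp b c)) (F.imp b (F.imp a c))) :=
  derToProv hF (ded hF (ded hF (ded hF
    (.mp (.mp (.hyp (.tail _ (.tail _ (.head _)))) (.hyp (.head _)))
      (.hyp (.tail _ (.head _)))))))

/-- Lift `exL_elim` to derivations from hypotheses. -/
lemma derExL (hF : F.Basic) {Γ : List F.S} {c : F.S}
    (G : List (Ordinal × F.S) → F.S)
    (h : ∀ ρ, Der F Γ (F.imp (G ρ) c)) : Der F Γ (F.imp (F.exL G) c) := by
  induction Γ generalizing c with
  | nil => exact .prov (hF.exL_elim G c fun ρ => derToProv hF (h ρ))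
  | cons g Γ ih =>
    have h' : ∀ ρ, Der F Γ (F.imp (G ρ) (F.imp g c)) := fun ρ =>
      .mp (.prov (p_swap hF g (G ρ) c)) (ded hF ((h ρ).weak (by simp)))
    have := ih h'
    have : Der F Γ (F.imp g (F.imp (F.exL G) c)) :=
      .mp (.prov (p_swap hF (F.exL G) g c)) this
    exact .mp (this.weak (by simp)) (.hyp (.head _))

lemma exLElim (hF : F.Basic) {Γ : List F.S} {c : F.S}
    {G : List (Ordinal × F.S) → F.S} (h : Der F Γ (F.exL G))
    (hc : ∀ ρ, Der F (G ρ :: Γ) c) : Der F Γ c :=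
  .mp (derExL hF G fun ρ => ded hF (hc ρ)) h

/-- Generic `foldr`-conjunction over a list. -/
def foldAnd (F : MFrame) (f : Ordinal × F.S → F.S) (ρ : List (Ordinal × F.S)) :
    F.S := ρ.foldr (fun p acc => F.and (f p) acc) F.top

lemma foldAnd_cons (f : Ordinal × F.S → F.S) (p : Ordinal × F.S)
    (l : List (Ordinal × F.S)) :
    foldAnd F f (p :: l) = F.and (f p) (foldAnd F f l) := rfl

lemma p_fold_append_intro (hF : F.Basic) (f : Ordinal × F.S → F.S)
    (ρ₁ ρ₂ : List (Ordinal × F.S)) :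
    F.Prov (F.imp (foldAnd F f ρ₁) (F.imp (foldAnd F f ρ₂)
      (foldAnd F f (ρ₁ ++ ρ₂)))) := by
  induction ρ₁ with
  | nil =>
    exact derToProv hF (ded hF (ded hF (.hyp (.head _))))
  | cons p l ih =>
    simp only [foldAnd_cons, List.cons_append]
    refine derToProv hF (ded hF (ded hF ?_))
    set Γ : List F.S := [foldAnd F f ρ₂, F.and (f p) (foldAnd F f l)] with hΓ
    have h1 : Der F Γ (F.and (f p) (foldAnd F f l)) := .hyp (.tail _ (.head _))
    have h2 : Der F Γ (foldAnd F f ρ₂) := .hyp (.head _)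
    exact andI hF (andL hF h1) (.mp (.mp (.prov ih) (andR hF h1)) h2)

lemma p_fold_append_left (hF : F.Basic) (f : Ordinal × F.S → F.S)
    (ρ₁ ρ₂ : List (Ordinal × F.S)) :
    F.Prov (F.imp (foldAnd F f (ρ₁ ++ ρ₂)) (foldAnd F f ρ₁)) := by
  induction ρ₁ with
  | nil => exact derToProv hF (ded hF (.prov (p_id hF F.bot)))
  | cons p l ih =>
    simp only [foldAnd_cons, List.cons_append]
    refine derToProv hF (ded hF ?_)
    have h : Der F [F.and (f p) (foldAnd F f (l ++ ρ₂))]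
        (F.and (f p) (foldAnd F f (l ++ ρ₂))) := .hyp (.head _)
    exact andI hF (andL hF h) (.mp (.prov ih) (andR hF h))

lemma p_fold_append_right (hF : F.Basic) (f : Ordinal × F.S → F.S)
    (ρ₁ ρ₂ : List (Ordinal × F.S)) :
    F.Prov (F.imp (foldAnd F f (ρ₁ ++ ρ₂)) (foldAnd F f ρ₂)) := by
  induction ρ₁ with
  | nil => exact p_id hF _
  | cons p l ih =>
    simp only [foldAnd_cons, List.cons_append]
    refine derToProv hF (ded hF ?_)
    have h : Der F [F.and (f p) (foldAnd F f (l ++ ρ₂))]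
        (F.and (f p) (foldAnd F f (l ++ ρ₂))) := .hyp (.head _)
    exact .mp (.prov ih) (andR hF h)

lemma boxMP (hF : F.Basic) {Γ : List F.S} {a b : F.S}
    (h1 : Der F Γ (F.box (F.imp a b))) (h2 : Der F Γ (F.box a)) :
    Der F Γ (F.box b) :=
  .mp (.mp (.prov (hF.dist a b)) h1) h2

lemma p_boxMono (hF : F.Basic) {a b : F.S} (h : F.Prov (F.imp a b)) :
    F.Prov (F.imp (F.box a) (F.box b)) :=
  hF.mp (hF.dist a b) (hF.nec h)

end Aux

/-- distribution for multiple-oracle Münchhausen provability,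
without induction: `T ⊢ [α]_T(φ→ψ) → ([α]_T φ → [α]_T ψ)` for `α ≺ Λ`. -/
theorem multiMunch_distribution (F : MFrame) (hF : F.Basic)
    (Λ : Ordinal) (M : Ordinal → F.S → F.S) (hM : F.MultiMunch Λ M) :
    ∀ α < Λ, ∀ φ ψ : F.S,
      F.Prov (F.imp (M α (F.imp φ ψ)) (F.imp (M α φ) (M α ψ))) := by
  intro α hα φ ψ
  let G : F.S → List (Ordinal × F.S) → F.S := fun χ ρ =>
    F.and (F.listLt ρ α)
      (F.and (F.listDia M ρ) (F.box (F.imp (F.listDia M ρ) χ)))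
  let R : F.S → F.S := fun χ => F.or (F.box χ) (F.exL (G χ))
  have hrec : ∀ χ : F.S, F.Prov (F.iff (M α χ) (R χ)) := fun χ => hM.recEq α hα χ
  have iffL : ∀ {a b : F.S}, F.Prov (F.iff a b) → F.Prov (F.imp a b) :=
    fun h => hF.mp (p_and_left hF _ _) h
  have iffR : ∀ {a b : F.S}, F.Prov (F.iff a b) → F.Prov (F.imp b a) :=
    fun h => hF.mp (p_and_right hF _ _) h
  -- append lemmas specialized
  have ltApp : ∀ ρ₁ ρ₂ : List (Ordinal × F.S),
      F.Prov (F.imp (F.listLt ρ₁ α) (F.imp (F.listLt ρ₂ α)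
        (F.listLt (ρ₁ ++ ρ₂) α))) :=
    fun ρ₁ ρ₂ => p_fold_append_intro hF (fun p => F.ltS p.1 α) ρ₁ ρ₂
  have diaApp : ∀ ρ₁ ρ₂ : List (Ordinal × F.S),
      F.Prov (F.imp (F.listDia M ρ₁) (F.imp (F.listDia M ρ₂)
        (F.listDia M (ρ₁ ++ ρ₂)))) :=
    fun ρ₁ ρ₂ => p_fold_append_intro hF (fun p => F.mdia M p.1 p.2) ρ₁ ρ₂
  have diaL : ∀ ρ₁ ρ₂ : List (Ordinal × F.S),
      F.Prov (F.imp (F.listDia M (ρ₁ ++ ρ₂)) (F.listDia M ρ₁)) :=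
    fun ρ₁ ρ₂ => p_fold_append_left hF (fun p => F.mdia M p.1 p.2) ρ₁ ρ₂
  have diaR : ∀ ρ₁ ρ₂ : List (Ordinal × F.S),
      F.Prov (F.imp (F.listDia M (ρ₁ ++ ρ₂)) (F.listDia M ρ₂)) :=
    fun ρ₁ ρ₂ => p_fold_append_right hF (fun p => F.mdia M p.1 p.2) ρ₁ ρ₂
  -- Case (box, box)
  have A1 : F.Prov (F.imp (F.box (F.imp φ ψ)) (F.imp (F.box φ) (R ψ))) := by
    refine derToProv hF (ded hF (ded hF ?_))
    exact .mp (.prov (p_or_inl hF (F.box ψ) (F.exL (G ψ))))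
      (boxMP hF (.hyp (.tail _ (.head _))) (.hyp (.head _)))
  -- Case (box, oracle)
  have A2 : F.Prov (F.imp (F.box (F.imp φ ψ)) (F.imp (F.exL (G φ)) (R ψ))) := by
    refine derToProv hF (ded hF (ded hF ?_))
    refine exLElim hF (.hyp (.head _)) fun ρ => ?_
    set Γ : List F.S := [G φ ρ, F.exL (G φ), F.box (F.imp φ ψ)] with hΓ
    have hg : Der F Γ (G φ ρ) := .hyp (.head _)
    have hlt : Der F Γ (F.listLt ρ α) := andL hF hg
    have hdia : Der F Γ (F.listDia M ρ) := andL hF (andR hF hg)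
    have hbox : Der F Γ (F.box (F.imp (F.listDia M ρ) φ)) := andR hF (andR hF hg)
    have hb : Der F Γ (F.box (F.imp φ ψ)) := .hyp (.tail _ (.tail _ (.head _)))
    have pB : F.Prov (F.imp (F.imp φ ψ)
        (F.imp (F.imp (F.listDia M ρ) φ) (F.imp (F.listDia M ρ) ψ))) := by
      refine derToProv hF (ded hF (ded hF (ded hF ?_)))
      exact .mp (.hyp (.tail _ (.tail _ (.head _))))
        (.mp (.hyp (.tail _ (.head _))) (.hyp (.head _)))
    have hb2 : Der F Γ (F.box (F.imp (F.listDia M ρ) ψ)) :=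
      boxMP hF (.mp (.prov (p_boxMono hF pB)) hb) hbox
    exact .mp (.prov (p_or_inr hF (F.box ψ) (F.exL (G ψ))))
      (.mp (.prov (hF.exL_intro (G ψ) ρ)) (andI hF hlt (andI hF hdia hb2)))
  -- Case (oracle, box)
  have B1 : F.Prov (F.imp (F.exL (G (F.imp φ ψ))) (F.imp (F.box φ) (R ψ))) := by
    refine derToProv hF (ded hF (ded hF ?_))
    refine exLElim hF (.hyp (.tail _ (.head _)))
      (fun ρ => ?_)
    set Γ : List F.S := [G (F.imp φ ψ) ρ, F.box φ, F.exL (G (F.imp φ ψ))] with hΓ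
    have hg : Der F Γ (G (F.imp φ ψ) ρ) := .hyp (.head _)
    have hlt : Der F Γ (F.listLt ρ α) := andL hF hg
    have hdia : Der F Γ (F.listDia M ρ) := andL hF (andR hF hg)
    have hbox : Der F Γ (F.box (F.imp (F.listDia M ρ) (F.imp φ ψ))) :=
      andR hF (andR hF hg)
    have hb : Der F Γ (F.box φ) := .hyp (.tail _ (.head _))
    have pC : F.Prov (F.imp (F.imp (F.listDia M ρ) (F.imp φ ψ))
        (F.imp φ (F.imp (F.listDia M ρ) ψ))) := by
      refine derToProv hF (ded hF (ded hF (ded hF ?_)))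
      exact .mp (.mp (.hyp (.tail _ (.tail _ (.head _)))) (.hyp (.head _)))
        (.hyp (.tail _ (.head _)))
    have hb2 : Der F Γ (F.box (F.imp (F.listDia M ρ) ψ)) :=
      boxMP hF (.mp (.prov (p_boxMono hF pC)) hbox) hb
    exact .mp (.prov (p_or_inr hF (F.box ψ) (F.exL (G ψ))))
      (.mp (.prov (hF.exL_intro (G ψ) ρ)) (andI hF hlt (andI hF hdia hb2)))
  -- Case (oracle, oracle): concatenate the sequences
  have B2 : F.Prov (F.imp (F.exL (G (F.imp φ ψ))) (F.imp (F.exL (G φ)) (R ψ))) := by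
    refine derToProv hF (ded hF (ded hF ?_))
    refine exLElim hF (.hyp (.tail _ (.head _))) (fun ρ₁ => ?_)
    refine exLElim hF (.hyp (.tail _ (.head _))) (fun ρ₂ => ?_)
    set Γ : List F.S := [G φ ρ₂, G (F.imp φ ψ) ρ₁, F.exL (G φ),
      F.exL (G (F.imp φ ψ))] with hΓ
    have hg1 : Der F Γ (G (F.imp φ ψ) ρ₁) := .hyp (.tail _ (.head _))
    have hg2 : Der F Γ (G φ ρ₂) := .hyp (.head _)
    have lt1 : Der F Γ (F.listLt ρ₁ α) := andL hF hg1
    have d1 : Der F Γ (F.listDia M ρ₁) := andL hF (andR hF hg1)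
    have b1 : Der F Γ (F.box (F.imp (F.listDia M ρ₁) (F.imp φ ψ))) :=
      andR hF (andR hF hg1)
    have lt2 : Der F Γ (F.listLt ρ₂ α) := andL hF hg2
    have d2 : Der F Γ (F.listDia M ρ₂) := andL hF (andR hF hg2)
    have b2 : Der F Γ (F.box (F.imp (F.listDia M ρ₂) φ)) := andR hF (andR hF hg2)
    have lt12 : Der F Γ (F.listLt (ρ₁ ++ ρ₂) α) :=
      .mp (.mp (.prov (ltApp ρ₁ ρ₂)) lt1) lt2
    have d12 : Der F Γ (F.listDia M (ρ₁ ++ ρ₂)) :=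
      .mp (.mp (.prov (diaApp ρ₁ ρ₂)) d1) d2
    have q : F.Prov (F.imp (F.imp (F.listDia M ρ₁) (F.imp φ ψ))
        (F.imp (F.imp (F.listDia M ρ₂) φ)
          (F.imp (F.listDia M (ρ₁ ++ ρ₂)) ψ))) := by
      refine derToProv hF (ded hF (ded hF (ded hF ?_)))
      set Γq : List F.S := [F.listDia M (ρ₁ ++ ρ₂), F.imp (F.listDia M ρ₂) φ,
        F.imp (F.listDia M ρ₁) (F.imp φ ψ)] with hΓq
      have dd1 : Der F Γq (F.listDia M ρ₁) :=
        .mp (.prov (diaL ρ₁ ρ₂)) (.hyp (.head _))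
      have dd2 : Der F Γq (F.listDia M ρ₂) :=
        .mp (.prov (diaR ρ₁ ρ₂)) (.hyp (.head _))
      exact .mp (.mp (.hyp (.tail _ (.tail _ (.head _)))) dd1)
        (.mp (.hyp (.tail _ (.head _))) dd2)
    have hb12 : Der F Γ (F.box (F.imp (F.listDia M (ρ₁ ++ ρ₂)) ψ)) :=
      boxMP hF (boxMP hF (.prov (hF.nec q)) b1) b2
    exact .mp (.prov (p_or_inr hF (F.box ψ) (F.exL (G ψ))))
      (.mp (.prov (hF.exL_intro (G ψ) (ρ₁ ++ ρ₂)))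
        (andI hF lt12 (andI hF d12 hb12)))
  -- combine the four cases
  have key : F.Prov (F.imp (R (F.imp φ ψ)) (F.imp (R φ) (R ψ))) := by
    refine derToProv hF (ded hF (ded hF ?_))
    refine orElim hF (.hyp (.tail _ (.head _))) ?_ ?_
    · refine orElim hF (.hyp (.tail _ (.head _))) ?_ ?_
      · exact .mp (.mp (.prov A1) (.hyp (.tail _ (.head _)))) (.hyp (.head _))
      · exact .mp (.mp (.prov A2) (.hyp (.tail _ (.head _)))) (.hyp (.head _))
    · refine orElim hF (.hyp (.tail _ (.head _))) ?_ ?_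
      · exact .mp (.mp (.prov B1) (.hyp (.tail _ (.head _)))) (.hyp (.head _))
      · exact .mp (.mp (.prov B2) (.hyp (.tail _ (.head _)))) (.hyp (.head _))
  have e1 := hrec (F.imp φ ψ)
  have e2 := hrec φ
  have e3 := hrec ψ
  refine derToProv hF (ded hF (ded hF ?_))
  exact .mp (.prov (iffR e3))
    (.mp (.mp (.prov key) (.mp (.prov (iffL e1)) (.hyp (.tail _ (.head _)))))
      (.mp (.prov (iffL e2)) (.hyp (.head _))))
end

section
/- Negative introspection for sequences of oracles: if T is a Λ-Münchhausen theory with predicate [α]_T, then T ⊢ ∀α ∀σ ∀τ≺α≺Λ ( ⟨τ⟩_T σ → [α]_T ⟨τ⟩_T σ ), where ⟨τ⟩_T σ asserts that every entry ⟨τ_i⟩_T σ(i) holds. -/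
namespace MunchAux

open MFrame

variable {F : MFrame} (hF : F.Basic)

include hF

lemma pI (a : F.S) : F.Prov (F.imp a a) :=
  hF.mp (hF.mp (hF.ax2 a (F.imp a a) a) (hF.ax1 a (F.imp a a))) (hF.ax1 a a)

/-- weakening: `Prov x → Prov (a → x)` -/
lemma wk {x : F.S} (a : F.S) (h : F.Prov x) : F.Prov (F.imp a x) :=
  hF.mp (hF.ax1 x a) h

lemma imp_trans {a b c : F.S} (h1 : F.Prov (F.imp a b)) (h2 : F.Prov (F.imp b c)) :
    F.Prov (F.imp a c) :=
  hF.mp (hF.mp (hF.ax2 a b c) (wk hF a h2)) h1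

lemma flip_meta {a b c : F.S} (h : F.Prov (F.imp a (F.imp b c))) :
    F.Prov (F.imp b (F.imp a c)) :=
  imp_trans hF (hF.ax1 b a) (hF.mp (hF.ax2 a b c) h)

/-- `Prov (a → ((a→c) → c))` -/
lemma app (a c : F.S) : F.Prov (F.imp a (F.imp (F.imp a c) c)) :=
  flip_meta hF (pI hF (F.imp a c))

/-- precomposition: from `Prov (c→a)` get `Prov ((a→x) → (c→x))` -/
lemma precomp {c a : F.S} (h : F.Prov (F.imp c a)) (x : F.S) :
    F.Prov (F.imp (F.imp a x) (F.imp c x)) :=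
  flip_meta hF (imp_trans hF h (app hF a x))

lemma dni' (a : F.S) : F.Prov (F.imp a (F.neg (F.neg a))) :=
  app hF a F.bot

lemma and_right (p q : F.S) : F.Prov (F.imp (F.and p q) q) :=
  hF.mp (hF.ax3 q (F.and p q))
    (imp_trans hF (hF.ax1 (F.neg q) p) (dni' hF (F.imp p (F.neg q))))

lemma and_left (p q : F.S) : F.Prov (F.imp (F.and p q) p) := by
  have h1 : F.Prov (F.imp (F.neg p) (F.imp p (F.neg q))) :=
    imp_trans hF (pI hF (F.neg p))
      (hF.mp (hF.ax2 p F.bot (F.neg q)) (wk hF p (hF.ax1 F.bot q)))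
  exact hF.mp (hF.ax3 p (F.and p q))
    (imp_trans hF h1 (dni' hF (F.imp p (F.neg q))))

/-- and-introduction under a common hypothesis -/
lemma and_intro {c a b : F.S} (ha : F.Prov (F.imp c a)) (hb : F.Prov (F.imp c b)) :
    F.Prov (F.imp c (F.and a b)) := by
  -- h := a → ¬b ; want c → (h → ⊥)
  have s1 : F.Prov (F.imp (F.imp a (F.neg b)) (F.imp c (F.neg b))) :=
    precomp hF ha (F.neg b)
  have s2 : F.Prov (F.imp (F.imp a (F.neg b)) (F.imp (F.imp c b) (F.imp c F.bot))) :=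
    imp_trans hF s1 (hF.ax2 c b F.bot)
  have s3 : F.Prov (F.imp (F.imp a (F.neg b)) (F.imp c F.bot)) :=
    hF.mp (flip_meta hF s2) hb
  exact flip_meta hF s3

lemma prov_top : F.Prov F.top := pI hF F.bot

lemma and_intro_prov {a b : F.S} (ha : F.Prov a) (hb : F.Prov b) :
    F.Prov (F.and a b) :=
  hF.mp (and_intro hF (wk hF F.top ha) (wk hF F.top hb)) (prov_top hF)

lemma listLt_prov (M : Ordinal → F.S → F.S) (α : Ordinal)
    (ρ : List (Ordinal × F.S)) (h : ∀ p ∈ ρ, p.1 < α) :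
    F.Prov (F.listLt ρ α) := by
  induction ρ with
  | nil => exact prov_top hF
  | cons p ρ ih =>
    exact and_intro_prov hF (hF.ltS_intro (h p List.mem_cons_self))
      (ih fun q hq => h q (List.mem_cons_of_mem p hq))

end MunchAux

/-- negative introspection for sequences of oracles: for
`τ ≺ α ≺ Λ` (every ordinal entry of the sequence `ρ` of oracles below `α`),
`T ⊢ ⟨τ⟩_T σ → [α]_T ⟨τ⟩_T σ`. -/
theorem multiMunch_seq_negIntro (F : MFrame) (hF : F.Basic)
    (Λ : Ordinal) (M : Ordinal → F.S → F.S) (hM : F.MultiMunch Λ M) :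
    ∀ α < Λ, ∀ ρ : List (Ordinal × F.S), (∀ p ∈ ρ, p.1 < α) →
      F.Prov (F.imp (F.listDia M ρ) (M α (F.listDia M ρ))) := by
  intro α hα ρ hρ
  open MunchAux in
  set d := F.listDia M ρ with hd
  set G : List (Ordinal × F.S) → F.S := fun ρ' =>
    F.and (F.listLt ρ' α) (F.and (F.listDia M ρ') (F.box (F.imp (F.listDia M ρ') d)))
    with hG
  have h1 : F.Prov (F.imp d (F.listLt ρ α)) :=
    wk hF d (listLt_prov hF M α ρ hρ)
  have h2 : F.Prov (F.imp d d) := pI hF d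
  have h3 : F.Prov (F.imp d (F.box (F.imp d d))) := wk hF d (hF.nec h2)
  have hand : F.Prov (F.imp d (G ρ)) := and_intro hF h1 (and_intro hF h2 h3)
  have hex : F.Prov (F.imp d (F.exL G)) := imp_trans hF hand (hF.exL_intro G ρ)
  have hor : F.Prov (F.imp (F.exL G) (F.or (F.box d) (F.exL G))) :=
    hF.ax1 (F.exL G) (F.neg (F.box d))
  have hrec := hM.recEq α hα d
  have hback : F.Prov (F.imp (F.or (F.box d) (F.exL G)) (M α d)) :=
    hF.mp (and_right hF _ _) hrec
  exact imp_trans hF hex (imp_trans hF hor hback)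
end
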